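/- arXiv:1305.6196 — 5 statements merged into one kernel-verified Lean document; each statement's English description precedes it below -/
import Mathlib

section
/- Let T be a tree. For every edge e of T, let p_1(e) and p_2(e) denote the numbers of pendent vertices of T lying in the two connected components of T - e. Then the terminal Wiener index of T satisfies TW(T) = Σ_{e ∈ E(T)} p_1(e)·p_2(e). -/
open Finset

/-- The pendent vertices of a graph: the vertices of degree 1. -/
def pendentFinset {V : Type*} [Fintype V] (G : SimpleGraph V) [DecidableRel G.Adj] : Finset V :=
  univ.filter (fun v => G.degree v = 1)

/-- The terminal Wiener index of a graph: the sum of the distances over all unordered pairs of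
pendent vertices, i.e. half of the sum over all ordered pairs of pendent vertices. -/
noncomputable def terminalWienerIndex {V : Type*} [Fintype V] (G : SimpleGraph V)
    [DecidableRel G.Adj] : ℕ :=
  (∑ u ∈ pendentFinset G, ∑ v ∈ pendentFinset G, G.dist u v) / 2

/-- The number of pendent vertices of `G` lying in the connected component of `u` in the graph
obtained from `G` by deleting the edge `s(u, v)`. -/
noncomputable def pendentSideCard {V : Type*} [Fintype V] (G : SimpleGraph V)
    [DecidableRel G.Adj] (u v : V) : ℕ :=
  Nat.card {w : V | G.degree w = 1 ∧ (G.deleteEdges {s(u, v)}).Reachable u w}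

/-- For an edge `e = s(u,v)`, the product `p₁(e) * p₂(e)` of the numbers of pendent vertices
lying in the two connected components obtained by deleting `e`. -/
noncomputable def edgePendentProd {V : Type*} [Fintype V] (G : SimpleGraph V)
    [DecidableRel G.Adj] : Sym2 V → ℕ :=
  Sym2.lift ⟨fun u v => pendentSideCard G u v * pendentSideCard G v u,
    fun u v => mul_comm _ _⟩


section Helpers

open SimpleGraph

variable {V : Type*} {T : SimpleGraph V}

variable {V : Type*} {T : SimpleGraph V}

lemma tree_not_reach (hT : T.IsTree) {a b : V} (hab : T.Adj a b) :
    ¬ (T.deleteEdges {s(a,b)}).Reachable a b := by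
  have h := (isAcyclic_iff_forall_adj_isBridge.mp hT.IsAcyclic) hab
  rw [isBridge_iff] at h
  exact h

lemma side_extend (hab : T.Adj a b) :
    ∀ {x w : V}, T.Walk x w →
      ((T.deleteEdges {s(a,b)}).Reachable a x ∨ (T.deleteEdges {s(a,b)}).Reachable b x) →
      ((T.deleteEdges {s(a,b)}).Reachable a w ∨ (T.deleteEdges {s(a,b)}).Reachable b w) := by
  intro x w p
  induction p with
  | nil => exact id
  | @cons x y w h q ih =>
    intro hx
    apply ih
    by_cases he : s(x, y) = s(a, b)
    · rw [Sym2.eq_iff] at he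
      rcases he with ⟨rfl, rfl⟩ | ⟨rfl, rfl⟩
      · exact Or.inr (Reachable.refl _)
      · exact Or.inl (Reachable.refl _)
    · have hadj : (T.deleteEdges {s(a,b)}).Adj x y := by
        simp [h, he]
      rcases hx with hx | hx
      · exact Or.inl (hx.trans hadj.reachable)
      · exact Or.inr (hx.trans hadj.reachable)

lemma side_cover (hT : T.IsTree) {a b : V} (hab : T.Adj a b) (w : V) :
    (T.deleteEdges {s(a,b)}).Reachable a w ∨ (T.deleteEdges {s(a,b)}).Reachable b w := by
  obtain ⟨p⟩ := hT.isConnected.preconnected a w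
  exact side_extend hab p (Or.inl (Reachable.refl _))

lemma side_disjoint (hT : T.IsTree) {a b : V} (hab : T.Adj a b) (w : V) :
    ¬ ((T.deleteEdges {s(a,b)}).Reachable a w ∧ (T.deleteEdges {s(a,b)}).Reachable b w) := by
  rintro ⟨h1, h2⟩
  exact tree_not_reach hT hab (h1.trans h2.symm)

lemma sep_iff (hT : T.IsTree) {a b : V} (hab : T.Adj a b) (u v : V) :
    ¬ (T.deleteEdges {s(a,b)}).Reachable u v ↔
      ((T.deleteEdges {s(a,b)}).Reachable a u ∧ (T.deleteEdges {s(a,b)}).Reachable b v) ∨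
      ((T.deleteEdges {s(a,b)}).Reachable b u ∧ (T.deleteEdges {s(a,b)}).Reachable a v) := by
  constructor
  · intro hsep
    rcases side_cover hT hab u with hu | hu <;> rcases side_cover hT hab v with hv | hv
    · exact absurd (hu.symm.trans hv) hsep
    · exact Or.inl ⟨hu, hv⟩
    · exact Or.inr ⟨hu, hv⟩
    · exact absurd (hu.symm.trans hv) hsep
  · rintro (⟨hu, hv⟩ | ⟨hu, hv⟩) hr
    · exact side_disjoint hT hab v ⟨hu.trans hr, hv⟩
    · exact side_disjoint hT hab v ⟨hv, hu.trans hr⟩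

lemma map_spanning_sym2 {G H : SimpleGraph V} (h : G ≤ H) (f : Sym2 V) :
    Sym2.map (⇑(SimpleGraph.Hom.ofLE h)) f = f := by
  induction f using Sym2.ind with
  | _ x y => rfl

open scoped Classical in
lemma dist_eq_card_sep [Fintype V] [DecidableEq V] [DecidableRel T.Adj] (hT : T.IsTree) (u v : V) :
    T.dist u v = (T.edgeFinset.filter
      (fun e => ¬ (T.deleteEdges {e}).Reachable u v)).card := by
  classical
  obtain ⟨p, hp, hlen⟩ := (hT.isConnected.preconnected u v).exists_path_of_dist
  have hset : T.edgeFinset.filter (fun e => ¬ (T.deleteEdges {e}).Reachable u v)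
      = p.edges.toFinset := by
    ext e
    simp only [mem_filter, List.mem_toFinset, mem_edgeFinset]
    constructor
    · rintro ⟨he, hsep⟩
      by_contra hne
      exact hsep (p.toDeleteEdge e hne).reachable
    · intro hmem
      refine ⟨p.edges_subset_edgeSet hmem, ?_⟩
      rintro ⟨q⟩
      have henot : e ∉ q.edges := by
        intro hq
        have := q.edges_subset_edgeSet hq
        rw [edgeSet_deleteEdges] at this
        exact this.2 rfl
      let q' := (q.mapLe (T.deleteEdges_le _)).bypass
      have hq'path : q'.IsPath := SimpleGraph.Walk.bypass_isPath _
      have hq'edges : e ∉ q'.edges := by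
        intro hq
        apply henot
        have h1 := SimpleGraph.Walk.edges_bypass_subset (q.mapLe (T.deleteEdges_le _)) hq
        rw [SimpleGraph.Walk.edges_map, List.mem_map] at h1
        obtain ⟨f, hf1, hf2⟩ := h1
        rw [map_spanning_sym2] at hf2
        exact hf2 ▸ hf1
      have : q' = p := by
        obtain ⟨r, _, hr⟩ := hT.existsUnique_path u v
        rw [hr q' hq'path, hr p hp]
      rw [this] at hq'edges
      exact hq'edges hmem
  rw [hset, List.toFinset_card_of_nodup hp.isTrail.edges_nodup,
    SimpleGraph.Walk.length_edges, hlen]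

open scoped Classical in
lemma pendentSideCard_eq [Fintype V] [DecidableRel T.Adj] (x y : V) :
    pendentSideCard T x y = ((pendentFinset T).filter
      (fun w => (T.deleteEdges {s(x,y)}).Reachable x w)).card := by
  classical
  have hs : {w : V | T.degree w = 1 ∧ (T.deleteEdges {s(x,y)}).Reachable x w}
      = ↑((pendentFinset T).filter (fun w => (T.deleteEdges {s(x,y)}).Reachable x w)) := by
    ext w
    simp [pendentFinset]
  rw [pendentSideCard, hs, Nat.card_coe_set_eq, Set.ncard_coe_finset]

open scoped Classical in
lemma dist_eq_sum_sep [Fintype V] [DecidableEq V] [DecidableRel T.Adj] (hT : T.IsTree)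
    (u v : V) :
    T.dist u v = ∑ e ∈ T.edgeFinset,
      (if ¬ (T.deleteEdges {e}).Reachable u v then 1 else 0) := by
  rw [dist_eq_card_sep hT u v, Finset.card_filter]

open scoped Classical in
lemma edge_sum [Fintype V] [DecidableEq V] [DecidableRel T.Adj] (hT : T.IsTree)
    {a b : V} (hab : T.Adj a b) :
    ∑ u ∈ pendentFinset T, ∑ v ∈ pendentFinset T,
      (if ¬ (T.deleteEdges {s(a,b)}).Reachable u v then 1 else 0)
    = 2 * edgePendentProd T s(a,b) := by
  set G' := T.deleteEdges {s(a,b)} with hG'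
  have key : ∀ u v : V, (if ¬ G'.Reachable u v then 1 else 0) =
      (if G'.Reachable a u then 1 else 0) * (if G'.Reachable b v then 1 else 0)
      + (if G'.Reachable b u then 1 else 0) * (if G'.Reachable a v then 1 else 0) := by
    intro u v
    rcases side_cover hT hab u with hu | hu <;> rcases side_cover hT hab v with hv | hv <;> rw [← hG'] at hu hv
    · have hbu : ¬ G'.Reachable b u := fun h => side_disjoint hT hab u ⟨hu, h⟩
      have hbv : ¬ G'.Reachable b v := fun h => side_disjoint hT hab v ⟨hv, h⟩
      simp [hu, hv, hbu, hbv, hu.symm.trans hv]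
    · have hbu : ¬ G'.Reachable b u := fun h => side_disjoint hT hab u ⟨hu, h⟩
      have hav : ¬ G'.Reachable a v := fun h => side_disjoint hT hab v ⟨h, hv⟩
      have hsep : ¬ G'.Reachable u v := (sep_iff hT hab u v).mpr (Or.inl ⟨hu, hv⟩)
      simp [hu, hv, hbu, hav, hsep]
    · have hau : ¬ G'.Reachable a u := fun h => side_disjoint hT hab u ⟨h, hu⟩
      have hbv : ¬ G'.Reachable b v := fun h => side_disjoint hT hab v ⟨hv, h⟩
      have hsep : ¬ G'.Reachable u v := (sep_iff hT hab u v).mpr (Or.inr ⟨hu, hv⟩)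
      simp [hu, hv, hau, hbv, hsep]
    · have hau : ¬ G'.Reachable a u := fun h => side_disjoint hT hab u ⟨h, hu⟩
      have hav : ¬ G'.Reachable a v := fun h => side_disjoint hT hab v ⟨h, hv⟩
      simp [hu, hv, hau, hav, hu.symm.trans hv]
  have hA : pendentSideCard T a b
      = ((pendentFinset T).filter (fun w => G'.Reachable a w)).card := by
    rw [pendentSideCard_eq a b]
    congr
  have hB : pendentSideCard T b a
      = ((pendentFinset T).filter (fun w => G'.Reachable b w)).card := by
    rw [pendentSideCard_eq b a]
    have hswap : T.deleteEdges {s(b,a)} = G' := by rw [hG', Sym2.eq_swap]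
    simp only [hswap]
  calc ∑ u ∈ pendentFinset T, ∑ v ∈ pendentFinset T,
        (if ¬ G'.Reachable u v then 1 else 0)
      = ∑ u ∈ pendentFinset T, ∑ v ∈ pendentFinset T,
        ((if G'.Reachable a u then 1 else 0) * (if G'.Reachable b v then 1 else 0)
        + (if G'.Reachable b u then 1 else 0) * (if G'.Reachable a v then 1 else 0)) := by
        exact Finset.sum_congr rfl fun u _ => Finset.sum_congr rfl fun v _ => key u v
    _ = (∑ u ∈ pendentFinset T, if G'.Reachable a u then 1 else 0)
          * (∑ v ∈ pendentFinset T, if G'.Reachable b v then 1 else 0)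
        + (∑ u ∈ pendentFinset T, if G'.Reachable b u then 1 else 0)
          * (∑ v ∈ pendentFinset T, if G'.Reachable a v then 1 else 0) := by
        simp only [Finset.sum_add_distrib, ← Finset.mul_sum, ← Finset.sum_mul]
    _ = 2 * edgePendentProd T s(a,b) := by
        simp only [edgePendentProd, Sym2.lift_mk, hA, hB, Finset.sum_boole, ← Finset.card_filter, Nat.cast_id,
          Finset.sum_ite_eq]
        simp only [Finset.card_filter]
        ring

end Helpers

/-- For a tree `T`, the terminal Wiener index satisfies
`TW(T) = ∑_{e ∈ E(T)} p₁(e) * p₂(e)`. -/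
theorem terminal_wiener_index_eq_sum_edge_pendent_prod {V : Type*} [Fintype V] [DecidableEq V]
    (T : SimpleGraph V) [DecidableRel T.Adj] (hT : T.IsTree) :
    terminalWienerIndex T = ∑ e ∈ T.edgeFinset, edgePendentProd T e := by
  classical
  rw [terminalWienerIndex]
  have h1 : ∑ u ∈ pendentFinset T, ∑ v ∈ pendentFinset T, T.dist u v
      = ∑ e ∈ T.edgeFinset, ∑ u ∈ pendentFinset T, ∑ v ∈ pendentFinset T,
          (if ¬ (T.deleteEdges {e}).Reachable u v then 1 else 0) := by
    calc ∑ u ∈ pendentFinset T, ∑ v ∈ pendentFinset T, T.dist u v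
        = ∑ u ∈ pendentFinset T, ∑ v ∈ pendentFinset T, ∑ e ∈ T.edgeFinset,
            (if ¬ (T.deleteEdges {e}).Reachable u v then 1 else 0) := by
          exact Finset.sum_congr rfl fun u _ => Finset.sum_congr rfl fun v _ =>
            dist_eq_sum_sep hT u v
      _ = ∑ u ∈ pendentFinset T, ∑ e ∈ T.edgeFinset, ∑ v ∈ pendentFinset T,
            (if ¬ (T.deleteEdges {e}).Reachable u v then 1 else 0) := by
          exact Finset.sum_congr rfl fun u _ => Finset.sum_comm
      _ = _ := Finset.sum_comm
  rw [h1]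
  have h2 : ∀ e ∈ T.edgeFinset, (∑ u ∈ pendentFinset T, ∑ v ∈ pendentFinset T,
      (if ¬ (T.deleteEdges {e}).Reachable u v then 1 else 0)) = 2 * edgePendentProd T e := by
    intro e he
    induction e using Sym2.ind with
    | _ a b =>
      rw [SimpleGraph.mem_edgeFinset, SimpleGraph.mem_edgeSet] at he
      exact edge_sum hT he
  rw [Finset.sum_congr rfl h2, ← Finset.mul_sum]
  omega
end

section
/- Let T_1,...,T_m (m ≥ 2) be pairwise vertex-disjoint trees, where T_i has n_i vertices and a distinguished root w_i, and let T be the tree obtained by adding a new vertex w joined by an edge to each of w_1,...,w_m, so T has n = 1 + n_1 + ... + n_m ≥ 3 vertices. Then W(T) = Σ_{i=1}^m [ W(T_i) + (n - n_i)·d_{T_i}(w_i) - n_i² ] + n(n-1), where d_{T_i}(w_i) is the sum of the distances in T_i from w_i to all other vertices of T_i. -/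
open Finset

/-- The Wiener index of a graph: the sum of the distances over all unordered pairs of
vertices, i.e. half of the sum over all ordered pairs. -/
noncomputable def wienerIndex {V : Type*} [Fintype V] (G : SimpleGraph V) : ℕ :=
  (∑ u : V, ∑ v : V, G.dist u v) / 2

/-- The tree obtained from pairwise vertex-disjoint rooted trees `T i` (with root `w i`) by
adding a new vertex `none` joined by an edge to each of the roots `w i`. -/
def joinTrees {ι : Type*} {V : ι → Type*} (T : ∀ i, SimpleGraph (V i)) (w : ∀ i, V i) :
    SimpleGraph (Option (Σ i, V i)) :=
  SimpleGraph.fromRel (fun x y =>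
    (∃ i : ι, x = none ∧ y = some ⟨i, w i⟩) ∨
    (∃ (i : ι) (a b : V i), x = some ⟨i, a⟩ ∧ y = some ⟨i, b⟩ ∧ (T i).Adj a b))

namespace JoinTreesAux

variable {ι : Type*} {V : ι → Type*} (T : ∀ i, SimpleGraph (V i)) (w : ∀ i, V i)

lemma adj_some {i : ι} {a b : V i} (h : (T i).Adj a b) :
    (joinTrees T w).Adj (some ⟨i, a⟩) (some ⟨i, b⟩) := by
  rw [joinTrees, SimpleGraph.fromRel_adj]
  refine ⟨?_, Or.inl (Or.inr ⟨i, a, b, rfl, rfl, h⟩)⟩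
  intro hc
  exact h.ne (by simpa using hc)

lemma adj_none_root (i : ι) : (joinTrees T w).Adj none (some ⟨i, w i⟩) := by
  rw [joinTrees, SimpleGraph.fromRel_adj]
  exact ⟨by simp, Or.inl (Or.inl ⟨i, rfl, rfl⟩)⟩

/-- The inclusion of `T i` into the joined graph. -/
def homIn (i : ι) : T i →g joinTrees T w :=
  ⟨fun a => some ⟨i, a⟩, fun h => adj_some T w h⟩

lemma reach_none (hc : ∀ i, (T i).Connected) (i : ι) (a : V i) :
    (joinTrees T w).Reachable none (some ⟨i, a⟩) :=
  ((adj_none_root T w i).reachable).trans (((hc i) (w i) a).map (homIn T w i))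

lemma join_connected (hc : ∀ i, (T i).Connected) : (joinTrees T w).Connected := by
  rw [SimpleGraph.connected_iff]
  refine ⟨fun x y => ?_, ⟨none⟩⟩
  have h : ∀ z, (joinTrees T w).Reachable none z := by
    rintro (_ | ⟨i, a⟩)
    · exact SimpleGraph.Reachable.refl _
    · exact reach_none T w hc i a
  exact (h x).symm.trans (h y)

variable [DecidableEq ι]

/-- Explicit distance function on the joined graph. -/
noncomputable def jd : Option (Σ i, V i) → Option (Σ i, V i) → ℕ
  | none, none => 0
  | none, some ⟨j, b⟩ => (T j).dist (w j) b + 1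
  | some ⟨i, a⟩, none => (T i).dist (w i) a + 1
  | some ⟨i, a⟩, some ⟨j, b⟩ =>
    if h : i = j then (T j).dist (h ▸ a) b
    else ((T i).dist (w i) a + 1) + ((T j).dist (w j) b + 1)

@[simp] lemma jd_none_none : jd T w none none = 0 := rfl

@[simp] lemma jd_none_some {j : ι} {b : V j} :
    jd T w none (some ⟨j, b⟩) = (T j).dist (w j) b + 1 := rfl

@[simp] lemma jd_some_none {i : ι} {a : V i} :
    jd T w (some ⟨i, a⟩) none = (T i).dist (w i) a + 1 := rfl

lemma jd_some_some {i j : ι} {a : V i} {b : V j} :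
    jd T w (some ⟨i, a⟩) (some ⟨j, b⟩) =
      if h : i = j then (T j).dist (h ▸ a) b
      else ((T i).dist (w i) a + 1) + ((T j).dist (w j) b + 1) := rfl

@[simp] lemma jd_some_some_same {i : ι} {a b : V i} :
    jd T w (some ⟨i, a⟩) (some ⟨i, b⟩) = (T i).dist a b := by
  rw [jd_some_some, dif_pos rfl]

lemma jd_some_some_ne {i j : ι} (h : i ≠ j) {a : V i} {b : V j} :
    jd T w (some ⟨i, a⟩) (some ⟨j, b⟩) =
      ((T i).dist (w i) a + 1) + ((T j).dist (w j) b + 1) := by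
  rw [jd_some_some, dif_neg h]

lemma jd_self (x : Option (Σ i, V i)) : jd T w x x = 0 := by
  rcases x with _ | ⟨i, a⟩
  · rfl
  · simp

lemma lip (hc : ∀ i, (T i).Connected) {x z : Option (Σ i, V i)}
    (hxz : (joinTrees T w).Adj x z) (y : Option (Σ i, V i)) :
    jd T w x y ≤ jd T w z y + 1 := by
  have key : ∀ (i : ι) (a b : V i), (T i).Adj a b → ∀ y,
      jd T w (some ⟨i, a⟩) y ≤ jd T w (some ⟨i, b⟩) y + 1 := by
    intro i a b hab y
    have hd : (T i).dist a b ≤ 1 := by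
      simpa using SimpleGraph.dist_le hab.toWalk
    rcases y with _ | ⟨j, c⟩
    · simp only [jd_some_none]
      have := (hc i).dist_triangle (u := w i) (v := b) (w := a)
      have hba : (T i).dist b a ≤ 1 := SimpleGraph.dist_comm (G := T i) (u := b) (v := a) ▸ hd
      omega
    · by_cases h : i = j
      · subst h
        simp only [jd_some_some_same]
        have := (hc i).dist_triangle (u := a) (v := b) (w := c)
        omega
      · rw [jd_some_some_ne T w h, jd_some_some_ne T w h]
        have := (hc i).dist_triangle (u := w i) (v := b) (w := a)
        have hba : (T i).dist b a ≤ 1 := SimpleGraph.dist_comm (G := T i) (u := b) (v := a) ▸ hd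
        omega
  have keyroot : ∀ (i : ι) (y : Option (Σ i, V i)),
      jd T w none y ≤ jd T w (some ⟨i, w i⟩) y + 1 ∧
      jd T w (some ⟨i, w i⟩) y ≤ jd T w none y + 1 := by
    intro i y
    rcases y with _ | ⟨j, c⟩
    · simp
    · by_cases h : i = j
      · subst h
        refine ⟨?_, ?_⟩ <;> simp <;> omega
      · rw [jd_some_some_ne T w h]
        refine ⟨?_, ?_⟩ <;> simp [SimpleGraph.dist_self] <;> omega
  rw [joinTrees, SimpleGraph.fromRel_adj] at hxz
  obtain ⟨-, h | h⟩ := hxz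
  · rcases h with ⟨i, rfl, rfl⟩ | ⟨i, a, b, rfl, rfl, hab⟩
    · exact (keyroot i y).1
    · exact key i a b hab y
  · rcases h with ⟨i, rfl, rfl⟩ | ⟨i, a, b, rfl, rfl, hab⟩
    · exact (keyroot i y).2
    · exact key i b a hab.symm y

lemma jd_le_length (hc : ∀ i, (T i).Connected) {x y : Option (Σ i, V i)}
    (p : (joinTrees T w).Walk x y) : jd T w x y ≤ p.length := by
  induction p with
  | nil => simp [jd_self]
  | @cons u v z h p ih =>
    have := lip T w hc h z
    simp only [SimpleGraph.Walk.length_cons]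
    omega

lemma dist_some_le (hc : ∀ i, (T i).Connected) (i : ι) (a b : V i) :
    (joinTrees T w).dist (some ⟨i, a⟩) (some ⟨i, b⟩) ≤ (T i).dist a b := by
  obtain ⟨p, hp⟩ := (hc i).exists_walk_length_eq_dist a b
  calc (joinTrees T w).dist (some ⟨i, a⟩) (some ⟨i, b⟩) ≤ (p.map (homIn T w i)).length :=
        SimpleGraph.dist_le _
    _ = (T i).dist a b := by rw [SimpleGraph.Walk.length_map, hp]

lemma dist_none_root_le (i : ι) : (joinTrees T w).dist none (some ⟨i, w i⟩) ≤ 1 := by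
  simpa using SimpleGraph.dist_le (adj_none_root T w i).toWalk

lemma dist_eq (hc : ∀ i, (T i).Connected) (x y : Option (Σ i, V i)) :
    (joinTrees T w).dist x y = jd T w x y := by
  have hconn := join_connected T w hc
  have hup : ∀ (j : ι) (b : V j),
      (joinTrees T w).dist none (some ⟨j, b⟩) ≤ (T j).dist (w j) b + 1 := by
    intro j b
    calc (joinTrees T w).dist none (some ⟨j, b⟩)
        ≤ (joinTrees T w).dist none (some ⟨j, w j⟩)
          + (joinTrees T w).dist (some ⟨j, w j⟩) (some ⟨j, b⟩) := hconn.dist_triangle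
      _ ≤ 1 + (T j).dist (w j) b :=
          add_le_add (dist_none_root_le T w j) (dist_some_le T w hc j _ _)
      _ = (T j).dist (w j) b + 1 := by omega
  refine le_antisymm ?_ ?_
  · rcases x with _ | ⟨i, a⟩ <;> rcases y with _ | ⟨j, b⟩
    · simp
    · simpa using hup j b
    · rw [SimpleGraph.dist_comm]
      simpa using hup i a
    · by_cases h : i = j
      · subst h
        simpa using dist_some_le T w hc i a b
      · rw [jd_some_some_ne T w h]
        calc (joinTrees T w).dist (some ⟨i, a⟩) (some ⟨j, b⟩)
            ≤ (joinTrees T w).dist (some ⟨i, a⟩) none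
              + (joinTrees T w).dist none (some ⟨j, b⟩) := hconn.dist_triangle
          _ ≤ ((T i).dist (w i) a + 1) + ((T j).dist (w j) b + 1) := by
              refine add_le_add ?_ (hup j b)
              rw [SimpleGraph.dist_comm]
              exact hup i a
  · obtain ⟨p, hp⟩ := hconn.exists_walk_length_eq_dist x y
    rw [← hp]
    exact jd_le_length T w hc p

end JoinTreesAux

/-- A symmetric function vanishing on the diagonal has even double sum. -/
lemma even_double_sum {α : Type*} [DecidableEq α] (f : α → α → ℕ)
    (hsymm : ∀ x y, f x y = f y x) (hdiag : ∀ x, f x x = 0) (s : Finset α) :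
    Even (∑ x ∈ s, ∑ y ∈ s, f x y) := by
  induction s using Finset.induction with
  | empty => simp
  | @insert a s ha ih =>
    rw [Finset.sum_insert ha]
    simp_rw [Finset.sum_insert ha]
    rw [Finset.sum_add_distrib]
    have hs : ∑ x ∈ s, f x a = ∑ y ∈ s, f a y :=
      Finset.sum_congr rfl fun x _ => hsymm x a
    rw [hdiag, hs]
    obtain ⟨k, hk⟩ := ih
    exact ⟨∑ y ∈ s, f a y + k, by omega⟩

lemma two_mul_wienerIndex {V : Type*} [Fintype V] (G : SimpleGraph V) :
    wienerIndex G * 2 = ∑ u : V, ∑ v : V, G.dist u v := by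
  classical
  have he := even_double_sum (fun u v => G.dist u v)
    (fun x y => SimpleGraph.dist_comm) (fun x => SimpleGraph.dist_self) Finset.univ
  exact Nat.div_mul_cancel he.two_dvd

/-- Abstract arithmetic identity behind the Wiener index computation. -/
lemma sums_identity {ι : Type*} [Fintype ι] (Sw Dv N : ι → ℤ) (n : ℤ)
    (hn : n = 1 + ∑ j, N j) :
    (∑ j, (Dv j + N j)) + ∑ i, (Dv i + N i + Sw i
        + ((∑ j, N j) - N i) * (Dv i + 2 * N i) + N i * ((∑ j, Dv j) - Dv i))
      = (∑ i, (Sw i + 2 * ((n - N i) * Dv i) - 2 * N i ^ 2)) + 2 * (n * (n - 1)) := by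
  subst hn
  set M := ∑ j, N j with hM
  set E := ∑ j, Dv j with hE
  have h1 : ∑ i, (Dv i + N i + Sw i + (M - N i) * (Dv i + 2 * N i) + N i * (E - Dv i))
      = ∑ i, (Sw i + Dv i + N i + M * Dv i + (2 * M) * N i + E * N i
          - 2 * (N i * Dv i) - 2 * N i ^ 2) :=
    Finset.sum_congr rfl fun i _ => by ring
  have h2 : ∑ i, (Sw i + 2 * ((1 + M - N i) * Dv i) - 2 * N i ^ 2)
      = ∑ i, (Sw i + 2 * Dv i + (2 * M) * Dv i - 2 * (N i * Dv i) - 2 * N i ^ 2) :=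
    Finset.sum_congr rfl fun i _ => by ring
  rw [h1, h2]
  simp only [Finset.sum_sub_distrib, Finset.sum_add_distrib, ← Finset.mul_sum,
    ← Finset.sum_mul, Finset.sum_add_distrib, ← hM, ← hE]
  ring

/-- If `T` is the tree obtained by joining a new vertex `w` to the roots `w i` of `m ≥ 2`
pairwise vertex-disjoint trees `T i` of orders `n i`, and `n = 1 + ∑ i, n i`, then
`W(T) = ∑ i, (W(T i) + (n - n i) · d_{T i}(w i) - (n i)²) + n (n - 1)`, where `d_{T i}(w i)`
is the sum of the distances in `T i` between `w i` and all other vertices of `T i`. -/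
theorem wiener_index_joinTrees {ι : Type*} [Fintype ι] {V : ι → Type*} [∀ i, Fintype (V i)]
    (T : ∀ i, SimpleGraph (V i)) (w : ∀ i, V i)
    (hT : ∀ i, (T i).IsTree) (hm : 2 ≤ Fintype.card ι)
    (n : ℤ) (hn : n = 1 + ∑ j, (Fintype.card (V j) : ℤ)) :
    (wienerIndex (joinTrees T w) : ℤ) =
      (∑ i, ((wienerIndex (T i) : ℤ)
          + (n - (Fintype.card (V i) : ℤ)) * (∑ v : V i, ((T i).dist (w i) v : ℤ))
          - (Fintype.card (V i) : ℤ) ^ 2))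
        + n * (n - 1) := by
  classical
  have hc : ∀ i, (T i).Connected := fun i => (hT i).isConnected
  -- notation
  set N : ι → ℤ := fun i => (Fintype.card (V i) : ℤ) with hN
  set Dv : ι → ℤ := fun i => ∑ b : V i, ((T i).dist (w i) b : ℤ) with hDv
  set Sw : ι → ℤ := fun i => ∑ a : V i, ∑ b : V i, ((T i).dist a b : ℤ) with hSw
  have sumSigma : ∀ (g : (Σ i, V i) → ℤ), ∑ x, g x = ∑ i, ∑ a : V i, g ⟨i, a⟩ := by
    intro g
    rw [← Finset.univ_sigma_univ, Finset.sum_sigma]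
  -- compute the doubled Wiener index of the join
  have hS : (∑ u : Option (Σ i, V i), ∑ v, ((joinTrees T w).dist u v : ℤ))
      = (∑ j, (Dv j + N j)) + ∑ i, (Dv i + N i + Sw i
          + ((∑ j, N j) - N i) * (Dv i + 2 * N i) + N i * ((∑ j, Dv j) - Dv i)) := by
    simp_rw [JoinTreesAux.dist_eq T w hc]
    rw [Fintype.sum_option, sumSigma]
    have hnone : (∑ v : Option (Σ i, V i), (JoinTreesAux.jd T w none v : ℤ))
        = ∑ j, (Dv j + N j) := by
      rw [Fintype.sum_option, sumSigma]
      simp only [JoinTreesAux.jd_none_none, JoinTreesAux.jd_none_some]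
      push_cast
      rw [zero_add]
      refine Finset.sum_congr rfl fun j _ => ?_
      rw [Finset.sum_add_distrib, Finset.sum_const, Finset.card_univ, nsmul_eq_mul,
        mul_one, hDv, hN]
    have hinner : ∀ (i : ι) (a : V i),
        (∑ j, ∑ b : V j, (JoinTreesAux.jd T w (some ⟨i, a⟩) (some ⟨j, b⟩) : ℤ))
          = (∑ b : V i, ((T i).dist a b : ℤ))
            + (((∑ j, N j) - N i) * (((T i).dist (w i) a : ℤ) + 2)
              + ((∑ j, Dv j) - Dv i)) := by
      intro i a
      have hG : ∀ j, j ≠ i →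
          (∑ b : V j, (JoinTreesAux.jd T w (some ⟨i, a⟩) (some ⟨j, b⟩) : ℤ))
            = N j * (((T i).dist (w i) a : ℤ) + 2) + Dv j := by
        intro j hj
        have : ∀ b : V j, (JoinTreesAux.jd T w (some ⟨i, a⟩) (some ⟨j, b⟩) : ℤ)
            = (((T i).dist (w i) a : ℤ) + 2) + ((T j).dist (w j) b : ℤ) := by
          intro b
          rw [JoinTreesAux.jd_some_some_ne T w (fun h => hj h.symm)]
          push_cast
          ring
        rw [Finset.sum_congr rfl fun b _ => this b, Finset.sum_add_distrib,
          Finset.sum_const, Finset.card_univ, nsmul_eq_mul, hDv, hN]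
      rw [← Finset.add_sum_erase _ _ (Finset.mem_univ i)]
      have h1 : (∑ b : V i, (JoinTreesAux.jd T w (some ⟨i, a⟩) (some ⟨i, b⟩) : ℤ))
          = ∑ b : V i, ((T i).dist a b : ℤ) := by
        simp
      have h2 : (∑ j ∈ Finset.univ.erase i,
          ∑ b : V j, (JoinTreesAux.jd T w (some ⟨i, a⟩) (some ⟨j, b⟩) : ℤ))
          = ∑ j ∈ Finset.univ.erase i, (N j * (((T i).dist (w i) a : ℤ) + 2) + Dv j) :=
        Finset.sum_congr rfl fun j hj => hG j (Finset.ne_of_mem_erase hj)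
      rw [h1, h2, Finset.sum_erase_eq_sub (Finset.mem_univ i), Finset.sum_add_distrib,
        ← Finset.sum_mul]
      ring
    have hrow : ∀ i, (∑ a : V i, ∑ v : Option (Σ i, V i),
        (JoinTreesAux.jd T w (some ⟨i, a⟩) v : ℤ))
        = Dv i + N i + Sw i + ((∑ j, N j) - N i) * (Dv i + 2 * N i)
          + N i * ((∑ j, Dv j) - Dv i) := by
      intro i
      have step : ∀ a : V i, (∑ v : Option (Σ i, V i),
          (JoinTreesAux.jd T w (some ⟨i, a⟩) v : ℤ))
          = (((T i).dist (w i) a : ℤ) + 1) + ((∑ b : V i, ((T i).dist a b : ℤ))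
            + (((∑ j, N j) - N i) * (((T i).dist (w i) a : ℤ) + 2)
              + ((∑ j, Dv j) - Dv i))) := by
        intro a
        rw [Fintype.sum_option, sumSigma (fun x => (JoinTreesAux.jd T w (some ⟨i, a⟩) (some x) : ℤ)),
          hinner i a, JoinTreesAux.jd_some_none]
        push_cast
        ring
      rw [Finset.sum_congr rfl fun a _ => step a]
      simp only [Finset.sum_add_distrib, Finset.sum_sub_distrib, ← Finset.mul_sum,
        Finset.sum_const, Finset.card_univ, nsmul_eq_mul]
      rw [hSw, hDv, hN]
      ring
    rw [hnone, Finset.sum_congr rfl fun i _ => hrow i]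
  -- relate wienerIndex values to the doubled sums
  have hWj : (wienerIndex (joinTrees T w) : ℤ) * 2
      = ∑ u : Option (Σ i, V i), ∑ v, ((joinTrees T w).dist u v : ℤ) := by
    have h := two_mul_wienerIndex (joinTrees T w)
    calc (wienerIndex (joinTrees T w) : ℤ) * 2
        = ((wienerIndex (joinTrees T w) * 2 : ℕ) : ℤ) := by push_cast; ring
      _ = ((∑ u : Option (Σ i, V i), ∑ v, (joinTrees T w).dist u v : ℕ) : ℤ) := by rw [h]
      _ = ∑ u : Option (Σ i, V i), ∑ v, ((joinTrees T w).dist u v : ℤ) := by push_cast; rfl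
  have hWi : ∀ i, (wienerIndex (T i) : ℤ) * 2 = Sw i := by
    intro i
    have h := two_mul_wienerIndex (T i)
    have : (wienerIndex (T i) : ℤ) * 2 = ∑ a : V i, ∑ b : V i, ((T i).dist a b : ℤ) := by
      calc (wienerIndex (T i) : ℤ) * 2
          = ((wienerIndex (T i) * 2 : ℕ) : ℤ) := by push_cast; ring
        _ = ((∑ a : V i, ∑ b : V i, (T i).dist a b : ℕ) : ℤ) := by rw [h]
        _ = ∑ a : V i, ∑ b : V i, ((T i).dist a b : ℤ) := by push_cast; rfl
    rw [this, hSw]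
  -- finish by cancelling the factor 2
  have key := sums_identity Sw Dv N n hn
  rw [← hS] at key
  apply mul_right_cancel₀ (b := (2 : ℤ)) two_ne_zero
  rw [hWj, key, add_mul, Finset.sum_mul]
  congr 1
  · refine Finset.sum_congr rfl fun i _ => ?_
    simp only [hN, hDv, hSw] at hWi ⊢
    linear_combination (-1 : ℤ) * hWi i
  · ring
end

section
/- Let B_{k+1} be a generalized Bethe tree of k+1 levels (k ≥ 1) with degree sequence d_1,...,d_k. Set n = 1 + Σ_{i=1}^k ∏_{j=1}^i d_j (the number of vertices of B_{k+1}), n_{i+1} = ∏_{j=1}^i d_j for 1 ≤ i ≤ k, and m_i = 1 + Σ_{j=i+1}^k ∏_{r=i+1}^j d_r for 1 ≤ i ≤ k (so m_k = 1). Then the Wiener index satisfies W(B_{k+1}) = Σ_{i=1}^k n_{i+1} · m_i · (n - m_i). -/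
open Finset

/-- `G` is a generalized Bethe tree of `k+1` levels with root `r` and degree sequence
`d 1, …, d k`: `G` is a tree; for `1 ≤ i ≤ k`, every vertex at distance `i-1` from `r` has
exactly `d i` neighbors at distance `i` from `r`; every vertex is at distance at most `k`
from `r`; and every vertex at distance `k` from `r` is a pendent vertex. -/
def IsGeneralizedBetheTree {V : Type*} [Fintype V] (G : SimpleGraph V) [DecidableRel G.Adj]
    (r : V) (k : ℕ) (d : ℕ → ℕ) : Prop :=
  G.IsTree ∧
  (∀ i ∈ Finset.Icc 1 k, ∀ v : V, G.dist r v = i - 1 →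
      ((G.neighborFinset v).filter (fun u => G.dist r u = i)).card = d i) ∧
  (∀ v : V, G.dist r v ≤ k) ∧
  (∀ v : V, G.dist r v = k → G.degree v = 1)

set_option linter.unusedSectionVars false

namespace BetheAux

variable {V : Type*} [DecidableEq V] {G : SimpleGraph V}

lemma dist_le_length_of_mem_support {r u z : V} (p : G.Walk r u) (hz : z ∈ p.support) :
    G.dist r z ≤ p.length :=
  le_trans (G.dist_le (p.takeUntil z hz)) (p.length_takeUntil_le hz)

lemma adj_dist_ne (hT : G.IsTree) (r : V) {u v : V} (h : G.Adj u v) :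
    G.dist r u ≠ G.dist r v := by
  intro he
  obtain ⟨p, hp, hpl⟩ := hT.isConnected.exists_path_of_dist r u
  obtain ⟨q, hq, hql⟩ := hT.isConnected.exists_path_of_dist r v
  by_cases hv : v ∈ p.support
  · have h1 : G.dist r v ≤ (p.takeUntil v hv).length := G.dist_le _
    have h2 : (p.takeUntil v hv).length + (p.dropUntil v hv).length = p.length := by
      rw [← SimpleGraph.Walk.length_append, SimpleGraph.Walk.take_spec]
    have h3 : (p.dropUntil v hv).length ≠ 0 := by
      intro h0
      exact h.ne' (SimpleGraph.Walk.eq_of_length_eq_zero h0)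
    omega
  · have hpath : (p.concat h).IsPath := by
      rw [← SimpleGraph.Walk.isPath_reverse_iff, SimpleGraph.Walk.reverse_concat,
        SimpleGraph.Walk.cons_isPath_iff]
      refine ⟨hp.reverse, ?_⟩
      simpa using hv
    have := hT.IsAcyclic.path_unique ⟨p.concat h, hpath⟩ ⟨q, hq⟩
    have hl := congrArg (fun (x : G.Path r v) => x.val.length) this
    simp only [SimpleGraph.Walk.length_concat] at hl
    omega

lemma adj_dist (hT : G.IsTree) (r : V) {u v : V} (h : G.Adj u v) :
    G.dist r v = G.dist r u + 1 ∨ G.dist r u = G.dist r v + 1 := by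
  have h1 : G.dist r v ≤ G.dist r u + 1 := by
    calc G.dist r v ≤ G.dist r u + G.dist u v := hT.isConnected.dist_triangle
      _ = G.dist r u + 1 := by rw [SimpleGraph.dist_eq_one_iff_adj.mpr h]
  have h2 : G.dist r u ≤ G.dist r v + 1 := by
    calc G.dist r u ≤ G.dist r v + G.dist v u := hT.isConnected.dist_triangle
      _ = G.dist r v + 1 := by rw [SimpleGraph.dist_eq_one_iff_adj.mpr h.symm]
  have h3 := adj_dist_ne hT r h
  omega

lemma exists_parent (hT : G.IsTree) (r : V) {u : V} {i : ℕ} (hu : G.dist r u = i + 1) :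
    ∃ x, G.Adj x u ∧ G.dist r x = i := by
  obtain ⟨p, hp, hpl⟩ := hT.isConnected.exists_path_of_dist r u
  have hnn : ¬ p.reverse.Nil := by
    rw [SimpleGraph.Walk.not_nil_iff_lt_length, SimpleGraph.Walk.length_reverse]
    omega
  obtain ⟨x, hadj, q, hq⟩ := SimpleGraph.Walk.not_nil_iff.mp hnn
  refine ⟨x, hadj.symm, ?_⟩
  have hq_len : q.length = i := by
    have := congrArg SimpleGraph.Walk.length hq
    simp only [SimpleGraph.Walk.length_reverse, SimpleGraph.Walk.length_cons] at this
    omega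
  have h1 : G.dist r x ≤ i := by
    rw [SimpleGraph.dist_comm]
    exact le_of_le_of_eq (G.dist_le q) hq_len
  have h2 : i + 1 ≤ G.dist r x + 1 := by
    calc i + 1 = G.dist r u := hu.symm
      _ ≤ G.dist r x + G.dist x u := hT.isConnected.dist_triangle
      _ = G.dist r x + 1 := by rw [SimpleGraph.dist_eq_one_iff_adj.mpr hadj.symm]
  omega

lemma parent_unique (hT : G.IsTree) (r : V) {u x y : V} {i : ℕ}
    (hu : G.dist r u = i + 1) (hx : G.Adj x u) (hy : G.Adj y u)
    (hxi : G.dist r x = i) (hyi : G.dist r y = i) : x = y := by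
  obtain ⟨p, hp, hpl⟩ := hT.isConnected.exists_path_of_dist r x
  obtain ⟨q, hq, hql⟩ := hT.isConnected.exists_path_of_dist r y
  have hup : u ∉ p.support := fun hmem => by
    have := dist_le_length_of_mem_support p hmem; omega
  have huq : u ∉ q.support := fun hmem => by
    have := dist_le_length_of_mem_support q hmem; omega
  have h1 : (p.concat hx).IsPath := by
    rw [← SimpleGraph.Walk.isPath_reverse_iff, SimpleGraph.Walk.reverse_concat,
      SimpleGraph.Walk.cons_isPath_iff]
    exact ⟨hp.reverse, by simpa using hup⟩
  have h2 : (q.concat hy).IsPath := by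
    rw [← SimpleGraph.Walk.isPath_reverse_iff, SimpleGraph.Walk.reverse_concat,
      SimpleGraph.Walk.cons_isPath_iff]
    exact ⟨hq.reverse, by simpa using huq⟩
  have heq := hT.IsAcyclic.path_unique ⟨p.concat hx, h1⟩ ⟨q.concat hy, h2⟩
  have hw : p.concat hx = q.concat hy := congrArg Subtype.val heq
  obtain ⟨hv, -⟩ := SimpleGraph.Walk.concat_inj hw
  exact hv


/-- If `u ≠ w` and `depth u ≤ depth w`, stepping from `w` to its parent `p`
decreases the distance to `u`. -/
lemma dist_to_parent (hT : G.IsTree) (r : V) :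
    ∀ n {u w p : V}, G.dist u w = n → u ≠ w → G.dist r u ≤ G.dist r w →
      G.Adj p w → G.dist r p + 1 = G.dist r w →
      G.dist u p + 1 = G.dist u w := by
  intro n
  induction n using Nat.strong_induction_on with
  | _ n ih =>
    intro u w p hn hne hle hadj hp
    have hpos : 0 < G.dist u w := hT.isConnected.pos_dist_of_ne hne
    obtain ⟨q, hq, hql⟩ := hT.isConnected.exists_path_of_dist u w
    have hnn : ¬ q.reverse.Nil := by
      rw [SimpleGraph.Walk.not_nil_iff_lt_length, SimpleGraph.Walk.length_reverse]
      omega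
    obtain ⟨w', hadj', t, ht⟩ := SimpleGraph.Walk.not_nil_iff.mp hnn
    have ht_len : t.length = q.length - 1 := by
      have := congrArg SimpleGraph.Walk.length ht
      simp only [SimpleGraph.Walk.length_reverse, SimpleGraph.Walk.length_cons] at this
      omega
    have hW' : G.dist u w' + 1 = G.dist u w := by
      have h1 : G.dist u w' ≤ q.length - 1 := by
        rw [SimpleGraph.dist_comm]
        exact le_of_le_of_eq (G.dist_le t) ht_len
      have h2 : G.dist u w ≤ G.dist u w' + 1 := by
        calc G.dist u w ≤ G.dist u w' + G.dist w' w := hT.isConnected.dist_triangle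
          _ = G.dist u w' + 1 := by
            rw [SimpleGraph.dist_eq_one_iff_adj.mpr hadj'.symm]
      omega
    rcases adj_dist hT r hadj' with h1 | h2
    · -- w' is a child of w : contradiction
      exfalso
      have hne' : u ≠ w' := by
        intro h; subst h; omega
      have hcon := ih (G.dist u w') (by omega) rfl hne' (by omega) hadj' (by omega)
      omega
    · -- w' is the parent of w, so w' = p
      have hwd : G.dist r w = (G.dist r w - 1) + 1 := by omega
      have : w' = p :=
        parent_unique hT r hwd hadj'.symm hadj (by omega) (by omega)
      subst this
      omega

/-- Parent of a non-root vertex in the subtree of `v` stays in the subtree of `v`. -/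
lemma parent_mem_subtree (hT : G.IsTree) (r : V) {v w p : V} (hvw : v ≠ w)
    (hw : G.dist r w = G.dist r v + G.dist v w)
    (hadj : G.Adj p w) (hp : G.dist r p + 1 = G.dist r w) :
    G.dist r p = G.dist r v + G.dist v p := by
  have hle : G.dist r v ≤ G.dist r w := by omega
  have := dist_to_parent hT r (G.dist v w) rfl hvw hle hadj hp
  omega

/-- Children of a vertex in the subtree of `v` stay in the subtree of `v`. -/
lemma child_mem_subtree (hT : G.IsTree) (r : V) {v w c : V}
    (hw : G.dist r w = G.dist r v + G.dist v w)
    (hadj : G.Adj w c) (hc : G.dist r c = G.dist r w + 1) :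
    G.dist r c = G.dist r v + G.dist v c := by
  have h1 : G.dist v c ≤ G.dist v w + 1 := by
    calc G.dist v c ≤ G.dist v w + G.dist w c := hT.isConnected.dist_triangle
      _ = G.dist v w + 1 := by rw [SimpleGraph.dist_eq_one_iff_adj.mpr hadj]
  have h2 : G.dist r c ≤ G.dist r v + G.dist v c := hT.isConnected.dist_triangle
  omega

variable (G) in
/-- Indicator that exactly one of `u`, `w` lies in the subtree below `v`. -/
noncomputable def chi (r v u w : V) : ℕ :=
  if (G.dist r u = G.dist r v + G.dist v u ↔ G.dist r w = G.dist r v + G.dist v w)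
  then 0 else 1

lemma chi_comm (r v u w : V) : chi G r v u w = chi G r v w u := by
  unfold chi
  by_cases h : G.dist r u = G.dist r v + G.dist v u ↔ G.dist r w = G.dist r v + G.dist v w
  · rw [if_pos h, if_pos h.symm]
  · rw [if_neg h, if_neg (fun hs => h hs.symm)]

lemma dist_eq_sum_chi [Fintype V] (hT : G.IsTree) (r : V) :
    ∀ (n : ℕ) (u w : V), G.dist u w = n →
      n = ∑ v ∈ univ.filter (fun v => 0 < G.dist r v), chi G r v u w := by
  intro n
  induction n using Nat.strong_induction_on with
  | _ n ih =>
  have key : ∀ u w : V, G.dist u w = n → u ≠ w → G.dist r u ≤ G.dist r w →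
      n = ∑ v ∈ univ.filter (fun v => 0 < G.dist r v), chi G r v u w := by
    intro u w hn hne hle
    have hpos : 0 < n := hn ▸ hT.isConnected.pos_dist_of_ne hne
    have hw1 : 1 ≤ G.dist r w := by
      rcases Nat.eq_zero_or_pos (G.dist r w) with h0 | h
      · exfalso
        have hu0 : G.dist r u = 0 := by omega
        have h1 : r = u := (hT.isConnected.dist_eq_zero_iff).mp hu0
        have h2 : r = w := (hT.isConnected.dist_eq_zero_iff).mp h0
        exact hne (h1 ▸ h2)
      · exact h
    obtain ⟨p, hpadj, hpd⟩ := exists_parent hT r (show G.dist r w = (G.dist r w - 1) + 1 by omega)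
    have hparent : G.dist r p + 1 = G.dist r w := by omega
    have hup : G.dist u p + 1 = G.dist u w := dist_to_parent hT r n hn hne hle hpadj hparent
    have ihp := ih (n - 1) (by omega) u p (by omega)
    have hwS : w ∈ univ.filter (fun v => 0 < G.dist r v) := by
      simp only [mem_filter, mem_univ, true_and]; omega
    have huvw : ¬ (G.dist r u = G.dist r w + G.dist w u) := by
      have : 0 < G.dist w u := by
        rw [SimpleGraph.dist_comm]; exact hT.isConnected.pos_dist_of_ne hne
      omega
    have hterm1 : chi G r w u w = 1 := by
      unfold chi
      rw [if_neg]
      rw [iff_true_right (by simp [SimpleGraph.dist_self])]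
      exact huvw
    have hterm2 : chi G r w u p = 0 := by
      unfold chi
      rw [if_pos]
      constructor
      · intro h; exact absurd h huvw
      · intro h
        exfalso
        have : G.dist w p = 1 := SimpleGraph.dist_eq_one_iff_adj.mpr hpadj.symm
        omega
    have hcongr : ∀ x ∈ (univ.filter (fun v => 0 < G.dist r v)).erase w,
        chi G r x u w = chi G r x u p := by
      intro x hx
      obtain ⟨hxw, hx'⟩ := Finset.mem_erase.mp hx
      have hiff : (G.dist r w = G.dist r x + G.dist x w) ↔
          (G.dist r p = G.dist r x + G.dist x p) := by
        constructor
        · intro hmem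
          exact parent_mem_subtree hT r hxw hmem hpadj hparent
        · intro hmem
          have h1 : G.dist x w ≤ G.dist x p + 1 := by
            calc G.dist x w ≤ G.dist x p + G.dist p w := hT.isConnected.dist_triangle
              _ = G.dist x p + 1 := by rw [SimpleGraph.dist_eq_one_iff_adj.mpr hpadj]
          have h2 : G.dist r w ≤ G.dist r x + G.dist x w := hT.isConnected.dist_triangle
          omega
      unfold chi
      by_cases hc : G.dist r u = G.dist r x + G.dist x u
      · simp only [hc, true_iff, iff_true_left (Iff.rfl.mpr hc)]
        by_cases h2 : G.dist r w = G.dist r x + G.dist x w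
        · rw [if_pos (by tauto), if_pos (by tauto)]
        · rw [if_neg (by tauto), if_neg (by tauto)]
      · by_cases h2 : G.dist r w = G.dist r x + G.dist x w
        · rw [if_neg (by tauto), if_neg (by tauto)]
        · rw [if_pos (by tauto), if_pos (by tauto)]
    rw [← Finset.sum_erase_add _ _ hwS, hterm1]
    rw [Finset.sum_congr rfl hcongr]
    rw [← Finset.sum_erase_add _ _ hwS, hterm2, add_zero] at ihp
    omega
  intro u w hn
  by_cases hne : u = w
  · subst hne
    have h0 : n = 0 := by rw [← hn, SimpleGraph.dist_self]
    rw [h0]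
    symm
    apply Finset.sum_eq_zero
    intro v _
    unfold chi
    rw [if_pos Iff.rfl]
  rcases le_total (G.dist r u) (G.dist r w) with hle | hle
  · exact key u w hn hne hle
  · have h := key w u (by rwa [SimpleGraph.dist_comm]) (Ne.symm hne) hle
    calc n = ∑ v ∈ univ.filter (fun v => 0 < G.dist r v), chi G r v w u := h
      _ = ∑ v ∈ univ.filter (fun v => 0 < G.dist r v), chi G r v u w := by
        exact Finset.sum_congr rfl (fun v _ => (chi_comm r v u w).symm)


lemma sum_ite01 [Fintype V] (P : V → Prop) [DecidablePred P] :
    ∑ w : V, (if P w then (0 : ℕ) else 1) = (univ.filter (fun w => ¬ P w)).card := by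
  rw [Finset.card_filter]
  apply Finset.sum_congr rfl
  intro w _
  by_cases h : P w <;> simp [h]

lemma sum_sum_chi [Fintype V] (r v : V) :
    ∑ u : V, ∑ w : V, chi G r v u w
      = 2 * (univ.filter (fun x => G.dist r x = G.dist r v + G.dist v x)).card *
          (univ.filter (fun x => ¬ (G.dist r x = G.dist r v + G.dist v x))).card := by
  set P := fun x => G.dist r x = G.dist r v + G.dist v x with hP
  set a := (univ.filter P).card
  set b := (univ.filter (fun x => ¬ P x)).card
  have hinner : ∀ u : V, (∑ w : V, chi G r v u w) = if P u then b else a := by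
    intro u
    by_cases h : P u
    · rw [if_pos h]
      have : ∀ w : V, chi G r v u w = if P w then 0 else 1 := by
        intro w
        unfold chi
        by_cases hw : P w
        · rw [if_pos hw, if_pos (iff_of_true h hw)]
        · rw [if_neg hw, if_neg (by tauto)]
      rw [Finset.sum_congr rfl (fun w _ => this w)]
      exact sum_ite01 P
    · rw [if_neg h]
      have : ∀ w : V, chi G r v u w = if ¬ P w then 0 else 1 := by
        intro w
        unfold chi
        by_cases hw : P w
        · rw [if_neg (fun hiff => h (hiff.mpr hw)), if_neg (by tauto)]
        · rw [if_pos (iff_of_false h hw), if_pos (by tauto)]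
      rw [Finset.sum_congr rfl (fun w _ => this w)]
      have := sum_ite01 (fun w => ¬ P w)
      simpa [a] using this
  rw [Finset.sum_congr rfl (fun u _ => hinner u), Finset.sum_ite, Finset.sum_const,
    Finset.sum_const, smul_eq_mul, smul_eq_mul]
  ring

section Bethe

variable [Fintype V] {r : V} {k : ℕ} {d : ℕ → ℕ}

/-- cardinality of level `i`. -/
lemma level_card (hT : G.IsTree) [DecidableRel G.Adj]
    (hdeg : ∀ i ∈ Finset.Icc 1 k, ∀ v : V, G.dist r v = i - 1 →
      ((G.neighborFinset v).filter (fun u => G.dist r u = i)).card = d i) :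
    ∀ i, i ≤ k → (univ.filter (fun v => G.dist r v = i)).card = ∏ j ∈ Icc 1 i, d j := by
  intro i
  induction i with
  | zero =>
    intro _
    have h0 : univ.filter (fun v => G.dist r v = 0) = {r} := by
      ext v
      simp only [mem_filter, mem_univ, true_and, mem_singleton]
      rw [SimpleGraph.dist_comm, hT.isConnected.dist_eq_zero_iff]
    rw [h0]
    simp
  | succ i ihi =>
    intro hik
    have key : univ.filter (fun v => G.dist r v = i + 1) =
        (univ.filter (fun v => G.dist r v = i)).biUnion
          (fun p => (G.neighborFinset p).filter (fun u => G.dist r u = i + 1)) := by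
      ext u
      simp only [mem_biUnion, mem_filter, mem_univ, true_and, SimpleGraph.mem_neighborFinset]
      constructor
      · intro hu
        obtain ⟨x, hadj, hx⟩ := exists_parent hT r hu
        exact ⟨x, hx, hadj, hu⟩
      · rintro ⟨x, hx, hadj, hu⟩
        exact hu
    rw [key, Finset.card_biUnion]
    · have hcards : ∀ p ∈ univ.filter (fun v => G.dist r v = i),
          ((G.neighborFinset p).filter (fun u => G.dist r u = i + 1)).card = d (i + 1) := by
        intro p hp
        have hp' : G.dist r p = i := (Finset.mem_filter.mp hp).2
        exact hdeg (i + 1) (Finset.mem_Icc.mpr ⟨by omega, by omega⟩) p (by simpa using hp')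
      rw [Finset.sum_congr rfl hcards, Finset.sum_const, smul_eq_mul,
        ihi (by omega), Finset.prod_Icc_succ_top (by omega : 1 ≤ i + 1)]
    · intro x hx y hy hxy
      simp only [Finset.disjoint_left, mem_filter, SimpleGraph.mem_neighborFinset]
      rintro a ⟨hxa, hra⟩ ⟨hya, -⟩
      exact hxy (parent_unique hT r hra hxa hya
        (Finset.mem_filter.mp hx).2 (Finset.mem_filter.mp hy).2)

/-- cardinality of the subtree below a vertex `v` at level `i ≥ 1`. -/
lemma subtree_card (hT : G.IsTree) [DecidableRel G.Adj]
    (hdeg : ∀ i ∈ Finset.Icc 1 k, ∀ v : V, G.dist r v = i - 1 →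
      ((G.neighborFinset v).filter (fun u => G.dist r u = i)).card = d i)
    (hle : ∀ v : V, G.dist r v ≤ k)
    {v : V} {i : ℕ} (hi1 : 1 ≤ i) (hik : i ≤ k) (hv : G.dist r v = i) :
    (univ.filter (fun x => G.dist r x = G.dist r v + G.dist v x)).card
      = 1 + ∑ j ∈ Icc (i + 1) k, ∏ s ∈ Icc (i + 1) j, d s := by
  set D : ℕ → Finset V :=
    fun t => univ.filter (fun x => G.dist v x = t ∧ G.dist r x = i + t) with hD
  have hD0 : D 0 = {v} := by
    ext x
    simp only [hD, mem_filter, mem_univ, true_and, mem_singleton]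
    constructor
    · rintro ⟨h1, -⟩
      exact ((hT.isConnected.dist_eq_zero_iff).mp h1).symm
    · rintro rfl
      simp [SimpleGraph.dist_self, hv]
  have hDstep : ∀ t, i + (t + 1) ≤ k → (D (t + 1)).card = (D t).card * d (i + t + 1) := by
    intro t htk
    have key : D (t + 1) = (D t).biUnion
        (fun p => (G.neighborFinset p).filter (fun u => G.dist r u = i + t + 1)) := by
      ext y
      simp only [hD, mem_biUnion, mem_filter, mem_univ, true_and,
        SimpleGraph.mem_neighborFinset]
      constructor
      · rintro ⟨hvy, hry⟩
        have hry' : G.dist r y = (i + t) + 1 := by omega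
        obtain ⟨x, hadj, hx⟩ := exists_parent hT r hry'
        have hvney : v ≠ y := by
          intro h; subst h; rw [SimpleGraph.dist_self] at hvy; omega
        have hxs : G.dist r x = G.dist r v + G.dist v x := by
          have := parent_mem_subtree hT r hvney (by omega) hadj (by omega)
          omega
        refine ⟨x, ⟨by omega, by omega⟩, hadj, by omega⟩
      · rintro ⟨x, ⟨hvx, hrx⟩, hadj, hry⟩
        have hcs : G.dist r y = G.dist r v + G.dist v y := by
          have := child_mem_subtree hT r (v := v) (w := x) (c := y)
            (by omega) hadj (by omega)
          omega
        exact ⟨by omega, by omega⟩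
    rw [key, Finset.card_biUnion]
    · have hcards : ∀ p ∈ D t,
          ((G.neighborFinset p).filter (fun u => G.dist r u = i + t + 1)).card
            = d (i + t + 1) := by
        intro p hp
        have hp' : G.dist r p = i + t := (Finset.mem_filter.mp hp).2.2
        exact hdeg (i + t + 1) (Finset.mem_Icc.mpr ⟨by omega, by omega⟩) p (by simpa using hp')
      rw [Finset.sum_congr rfl hcards, Finset.sum_const, smul_eq_mul]
    · intro x hx y hy hxy
      simp only [Finset.disjoint_left, mem_filter, SimpleGraph.mem_neighborFinset]
      rintro a ⟨hxa, hra⟩ ⟨hya, -⟩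
      have hrx : G.dist r x = i + t := (Finset.mem_filter.mp hx).2.2
      have hry : G.dist r y = i + t := (Finset.mem_filter.mp hy).2.2
      exact hxy (parent_unique hT r hra hxa hya hrx hry)
  have hDcard : ∀ t, i + t ≤ k → (D t).card = ∏ s ∈ Icc (i + 1) (i + t), d s := by
    intro t
    induction t with
    | zero =>
      intro _
      rw [hD0]
      simp
    | succ t iht =>
      intro htk
      rw [hDstep t htk, iht (by omega),
        show i + (t + 1) = (i + t) + 1 by omega,
        Finset.prod_Icc_succ_top (by omega : i + 1 ≤ i + t + 1)]
  have hpart : univ.filter (fun x => G.dist r x = G.dist r v + G.dist v x)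
      = (Finset.range (k - i + 1)).biUnion D := by
    ext x
    simp only [hD, mem_biUnion, mem_filter, mem_univ, true_and, Finset.mem_range]
    constructor
    · intro hx
      have := hle x
      exact ⟨G.dist v x, by omega, rfl, by omega⟩
    · rintro ⟨t, htk, hvx, hrx⟩
      omega
  rw [hpart, Finset.card_biUnion]
  · rw [show k - i + 1 = 1 + (k - i) by omega]
    have hdisj : Disjoint (Finset.range 1)
        ((Finset.range (k - i)).map (addLeftEmbedding 1)) := by
      rw [Finset.disjoint_left]
      intro a ha hb
      simp only [Finset.mem_range] at ha
      simp only [Finset.mem_map, Finset.mem_range, addLeftEmbedding_apply] at hb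
      obtain ⟨b, -, hba⟩ := hb
      omega
    rw [Finset.range_add, Finset.sum_union hdisj]
    congr 1
    · simp only [Finset.range_one, Finset.sum_singleton, hD0]
      simp
    · rw [Finset.sum_map]
      have h1 : ∀ t ∈ Finset.range (k - i), (D (1 + t)).card
          = ∏ s ∈ Icc (i + 1) (i + 1 + t), d s := by
        intro t ht
        have h2 : i + (1 + t) = i + 1 + t := by omega
        rw [hDcard (1 + t) (by simp only [Finset.mem_range] at ht; omega), h2]
      rw [Finset.sum_congr rfl (fun t ht => by
        simp only [addLeftEmbedding_apply]
        exact h1 t ht)]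
      apply Finset.sum_bij' (fun t _ => i + 1 + t) (fun j _ => j - (i + 1))
      · intro t ht
        simp only [Finset.mem_range] at ht
        simp only [Finset.mem_Icc]
        omega
      · intro j hj
        simp only [Finset.mem_Icc] at hj
        simp only [Finset.mem_range]
        omega
      · intro t ht; omega
      · intro j hj
        simp only [Finset.mem_Icc] at hj
        omega
      · intro t ht; rfl
  · intro t1 h1 t2 h2 hne
    simp only [hD, Finset.disjoint_left, mem_filter]
    rintro a ⟨-, ha1, -⟩ ⟨-, ha2, -⟩
    exact hne (ha1 ▸ ha2 ▸ rfl)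


lemma card_V (hT : G.IsTree) [DecidableRel G.Adj]
    (hdeg : ∀ i ∈ Finset.Icc 1 k, ∀ v : V, G.dist r v = i - 1 →
      ((G.neighborFinset v).filter (fun u => G.dist r u = i)).card = d i)
    (hle : ∀ v : V, G.dist r v ≤ k) :
    Fintype.card V = 1 + ∑ i ∈ Icc 1 k, ∏ j ∈ Icc 1 i, d j := by
  have huniv : (univ : Finset V) = (Finset.range (k + 1)).biUnion
      (fun i => univ.filter (fun v => G.dist r v = i)) := by
    ext v
    simp only [mem_univ, mem_biUnion, mem_filter, Finset.mem_range, true_and, true_iff]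
    exact ⟨G.dist r v, by have := hle v; omega, rfl⟩
  have hdisj : ∀ i1 ∈ Finset.range (k + 1), ∀ i2 ∈ Finset.range (k + 1), i1 ≠ i2 →
      Disjoint (univ.filter (fun v => G.dist r v = i1))
        (univ.filter (fun v => G.dist r v = i2)) := by
    intro i1 _ i2 _ hne
    rw [Finset.disjoint_left]
    intro a ha hb
    rw [mem_filter] at ha hb
    exact hne (ha.2 ▸ hb.2 ▸ rfl)
  rw [← Finset.card_univ, huniv, Finset.card_biUnion hdisj]
  have hlv : ∀ i ∈ Finset.range (k + 1),
      (univ.filter (fun v => G.dist r v = i)).card = ∏ j ∈ Icc 1 i, d j := by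
    intro i hi
    exact level_card hT hdeg i (by simp only [Finset.mem_range] at hi; omega)
  rw [Finset.sum_congr rfl hlv]
  have hdisj2 : Disjoint (Finset.range 1) ((Finset.range k).map (addLeftEmbedding 1)) := by
    rw [Finset.disjoint_left]
    intro a ha hb
    simp only [Finset.mem_range] at ha
    simp only [Finset.mem_map, Finset.mem_range, addLeftEmbedding_apply] at hb
    obtain ⟨b, -, hba⟩ := hb
    omega
  rw [show k + 1 = 1 + k by omega, Finset.range_add, Finset.sum_union hdisj2,
    Finset.sum_map]
  simp only [addLeftEmbedding_apply]
  have e0 : ∑ x ∈ Finset.range 1, ∏ j ∈ Icc 1 x, d j = 1 := by simp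
  have e1 : ∑ x ∈ Finset.range k, ∏ j ∈ Icc 1 (1 + x), d j
      = ∑ i ∈ Icc 1 k, ∏ j ∈ Icc 1 i, d j := by
    refine Finset.sum_bij' (fun t _ => 1 + t) (fun j _ => j - 1) ?_ ?_ ?_ ?_ ?_
    · intro a ha
      simp only [Finset.mem_range] at ha
      simp only [Finset.mem_Icc]
      omega
    · intro a ha
      simp only [Finset.mem_Icc] at ha
      simp only [Finset.mem_range]
      omega
    · intro a ha
      show 1 + a - 1 = a
      omega
    · intro a ha
      simp only [Finset.mem_Icc] at ha
      show 1 + (a - 1) = a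
      omega
    · intro a ha
      rfl
  rw [e0, e1]

end Bethe

end BetheAux



/-- Wiener index of a generalized Bethe tree `B_{k+1}` of `k+1` levels:
`W(B_{k+1}) = ∑_{i=1}^k n_{i+1} · m_i · (n - m_i)` where `n_{i+1} = ∏_{j=1}^i d j`,
`m_i = 1 + ∑_{j=i+1}^k ∏_{r=i+1}^j d r` and `n = 1 + ∑_{i=1}^k ∏_{j=1}^i d j`. -/

theorem wiener_index_generalizedBetheTree {V : Type*} [Fintype V] (G : SimpleGraph V)
    [DecidableRel G.Adj] (r : V) (k : ℕ) (d : ℕ → ℕ)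
    (hk : 1 ≤ k) (hd : ∀ i ∈ Finset.Icc 1 k, 1 ≤ d i)
    (hG : IsGeneralizedBetheTree G r k d)
    (n : ℤ) (hn : n = 1 + ∑ i ∈ Finset.Icc 1 k, ∏ j ∈ Finset.Icc 1 i, (d j : ℤ))
    (m : ℕ → ℤ)
    (hm : ∀ i ∈ Finset.Icc 1 k,
      m i = 1 + ∑ j ∈ Finset.Icc (i + 1) k, ∏ s ∈ Finset.Icc (i + 1) j, (d s : ℤ)) :
    (wienerIndex G : ℤ) =
      ∑ i ∈ Finset.Icc 1 k, (∏ j ∈ Finset.Icc 1 i, (d j : ℤ)) * m i * (n - m i) := by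
  letI : DecidableEq V := Classical.decEq V
  obtain ⟨hT, hdeg, hlek, -⟩ := hG
  set N := Fintype.card V with hN
  set M : ℕ → ℕ := fun i => 1 + ∑ j ∈ Icc (i + 1) k, ∏ s ∈ Icc (i + 1) j, d s with hM
  set S : Finset V := univ.filter (fun v => 0 < G.dist r v) with hS
  set sub : V → Finset V :=
    fun v => univ.filter (fun x => G.dist r x = G.dist r v + G.dist v x) with hsub
  have hNcard : N = 1 + ∑ i ∈ Icc 1 k, ∏ j ∈ Icc 1 i, d j :=
    BetheAux.card_V hT hdeg hlek
  -- Step 1: total distance sum via chi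
  have h1 : ∑ u : V, ∑ w : V, G.dist u w
      = ∑ v ∈ S, ∑ u : V, ∑ w : V, BetheAux.chi G r v u w := by
    have e1 : ∀ u w : V, G.dist u w = ∑ v ∈ S, BetheAux.chi G r v u w :=
      fun u w => BetheAux.dist_eq_sum_chi hT r (G.dist u w) u w rfl
    calc ∑ u : V, ∑ w : V, G.dist u w
        = ∑ u : V, ∑ v ∈ S, ∑ w : V, BetheAux.chi G r v u w := by
          refine Finset.sum_congr rfl fun u _ => ?_
          rw [← Finset.sum_comm]
          exact Finset.sum_congr rfl fun w _ => e1 u w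
      _ = ∑ v ∈ S, ∑ u : V, ∑ w : V, BetheAux.chi G r v u w := Finset.sum_comm
  -- Step 2: per-vertex value
  have h2 : ∀ v ∈ S, ∑ u : V, ∑ w : V, BetheAux.chi G r v u w
      = 2 * (sub v).card * (N - (sub v).card) := by
    intro v _
    rw [BetheAux.sum_sum_chi r v]
    congr 1
    have := Finset.card_filter_add_card_filter_not (s := (univ : Finset V))
      (p := fun x => G.dist r x = G.dist r v + G.dist v x)
    simp only [Finset.card_univ] at this
    rw [← hN] at this
    have h3 : (sub v).card +
        (univ.filter (fun x => ¬ (G.dist r x = G.dist r v + G.dist v x))).card = N := this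
    omega
  -- Step 3: group by levels
  have hSdecomp : S = (Icc 1 k).biUnion
      (fun i => univ.filter (fun v => G.dist r v = i)) := by
    ext v
    simp only [hS, mem_filter, mem_univ, true_and, mem_biUnion, Finset.mem_Icc]
    constructor
    · intro hv
      exact ⟨G.dist r v, ⟨by omega, hlek v⟩, rfl⟩
    · rintro ⟨i, ⟨hi1, -⟩, hv⟩
      omega
  have hLdisj : ∀ i1 ∈ Icc 1 k, ∀ i2 ∈ Icc 1 k, i1 ≠ i2 →
      Disjoint (univ.filter (fun v => G.dist r v = i1))
        (univ.filter (fun v => G.dist r v = i2)) := by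
    intro i1 _ i2 _ hne
    rw [Finset.disjoint_left]
    intro a ha hb
    rw [mem_filter] at ha hb
    exact hne (ha.2 ▸ hb.2 ▸ rfl)
  have hsubcard : ∀ i ∈ Icc 1 k, ∀ v ∈ univ.filter (fun v => G.dist r v = i),
      (sub v).card = M i := by
    intro i hi v hv
    rw [Finset.mem_Icc] at hi
    exact BetheAux.subtree_card hT hdeg hlek hi.1 hi.2 (Finset.mem_filter.mp hv).2
  have htotal : ∑ u : V, ∑ w : V, G.dist u w
      = 2 * ∑ i ∈ Icc 1 k, (∏ j ∈ Icc 1 i, d j) * (M i * (N - M i)) := by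
    rw [h1, Finset.sum_congr rfl h2, hSdecomp, Finset.sum_biUnion]
    · rw [Finset.mul_sum]
      refine Finset.sum_congr rfl fun i hi => ?_
      have : ∀ v ∈ univ.filter (fun v => G.dist r v = i),
          2 * (sub v).card * (N - (sub v).card) = 2 * (M i * (N - M i)) := by
        intro v hv
        rw [hsubcard i hi v hv]
        ring
      rw [Finset.sum_congr rfl this, Finset.sum_const, smul_eq_mul,
        BetheAux.level_card hT hdeg i (Finset.mem_Icc.mp hi).2]
      ring
    · exact fun i hi j hj hne => hLdisj i hi j hj hne
  -- Step 4: Wiener index in ℕ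
  have hW : wienerIndex G = ∑ i ∈ Icc 1 k, (∏ j ∈ Icc 1 i, d j) * (M i * (N - M i)) := by
    rw [wienerIndex, htotal, Nat.mul_div_cancel_left _ (by norm_num : (0:ℕ) < 2)]
  -- Step 5: bounds for casting
  have hMle : ∀ i ∈ Icc 1 k, M i ≤ N := by
    intro i hi
    obtain ⟨hi1, hik⟩ := Finset.mem_Icc.mp hi
    have hpos : 0 < (univ.filter (fun v => G.dist r v = i)).card := by
      rw [BetheAux.level_card hT hdeg i hik]
      apply Finset.prod_pos
      intro j hj
      rw [Finset.mem_Icc] at hj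
      exact hd j (Finset.mem_Icc.mpr ⟨hj.1, by omega⟩)
    obtain ⟨v, hv⟩ := Finset.card_pos.mp hpos
    calc M i = (sub v).card := (hsubcard i hi v hv).symm
      _ ≤ (univ : Finset V).card := Finset.card_filter_le _ _
      _ = N := Finset.card_univ
  -- Step 6: casting to ℤ
  have hnN : n = (N : ℤ) := by
    rw [hn, hNcard]
    push_cast
    ring
  have hmM : ∀ i ∈ Icc 1 k, m i = (M i : ℤ) := by
    intro i hi
    rw [hm i hi, hM]
    push_cast
    ring
  rw [hW]
  push_cast
  refine Finset.sum_congr rfl fun i hi => ?_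
  rw [hmM i hi, hnN, Nat.cast_sub (hMle i hi)]
  push_cast
  ring
end

section
/- Let k ≥ 1 and d ≥ 3, and let T_{k,d} be the regular dendrimer tree of k+1 levels. Then its Wiener index satisfies W(T_{k,d}) = (d/(d-2)³)·[ (d-1)^{2k}·(k·d² - 2(k+1)·d + 1) + 2d·(d-1)^k - 1 ]. -/
open Finset

/-! ### Auxiliary tree lemmas -/

open SimpleGraph
open scoped Classical

section TreeLemmas

variable {V : Type*} {G : SimpleGraph V}

/-- In a tree, every path realizes the distance. -/
lemma tree_path_length (hT : G.IsTree) {a b : V} (p : G.Walk a b) (hp : p.IsPath) :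
    p.length = G.dist a b := by
  obtain ⟨q, hq, hql⟩ := hT.isConnected.exists_path_of_dist a b
  have := isAcyclic_iff_path_unique.mp hT.IsAcyclic (⟨p, hp⟩ : G.Path a b) ⟨q, hq⟩
  rw [← hql]
  exact congrArg _ (congrArg Subtype.val this)

/-- In a tree, adjacent vertices have levels differing by exactly one. -/
lemma tree_adj_level (hT : G.IsTree) {r u v : V} (h : G.Adj u v) :
    G.dist r v = G.dist r u + 1 ∨ G.dist r u = G.dist r v + 1 := by
  obtain ⟨p, hp, hpl⟩ := hT.isConnected.exists_path_of_dist r u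
  by_cases hv : v ∈ p.support
  · right
    have h1 : (p.takeUntil v hv).length = G.dist r v :=
      tree_path_length hT _ (hp.takeUntil hv)
    have h2 : (p.dropUntil v hv).length = G.dist v u :=
      tree_path_length hT _ (hp.dropUntil hv)
    have h3 : (p.takeUntil v hv).length + (p.dropUntil v hv).length = p.length := by
      rw [← SimpleGraph.Walk.length_append, p.take_spec hv]
    have h4 : G.dist v u = 1 := dist_eq_one_iff_adj.mpr h.symm
    omega
  · left
    have hp' : (SimpleGraph.Walk.cons h.symm p.reverse).reverse.IsPath := by
      rw [Walk.isPath_reverse_iff, Walk.cons_isPath_iff]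
      exact ⟨hp.reverse, by simpa using hv⟩
    have := tree_path_length hT _ hp'
    simpa [hpl] using this.symm

/-- Existence and uniqueness of the parent of a non-root vertex. -/
lemma tree_parent (hT : G.IsTree) {r v : V} (hv : G.dist r v ≠ 0) :
    ∃! u, G.Adj u v ∧ G.dist r u + 1 = G.dist r v := by
  obtain ⟨p, hp, hpl⟩ := hT.isConnected.exists_path_of_dist r v
  have hex : ∃ u, G.Adj u v ∧ G.dist r u + 1 = G.dist r v := by
    cases hq : p.reverse with
    | nil =>
        exact absurd SimpleGraph.dist_self hv
    | cons h q =>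
        refine ⟨_, h.symm, ?_⟩
        have hq' : q.IsPath := (hq ▸ hp.reverse).of_cons
        have : q.reverse.length = G.dist r _ := tree_path_length hT _ hq'.reverse
        have hl : p.reverse.length = q.length + 1 := by rw [hq]; simp
        simp only [SimpleGraph.Walk.length_reverse] at this hl
        omega
  obtain ⟨u, hu⟩ := hex
  refine ⟨u, hu, ?_⟩
  have key : ∀ w, G.Adj w v ∧ G.dist r w + 1 = G.dist r v →
      ∃ (pw : G.Walk r w) (hw : pw.IsPath) (hv' : v ∉ pw.support), True := by
    intro w ⟨hadj, hdw⟩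
    obtain ⟨pw, hpw, hpwl⟩ := hT.isConnected.exists_path_of_dist r w
    refine ⟨pw, hpw, fun hvs => ?_, trivial⟩
    have h1 : (pw.takeUntil v hvs).length = G.dist r v :=
      tree_path_length hT _ (hpw.takeUntil hvs)
    have h2 := SimpleGraph.Walk.length_takeUntil_le pw hvs
    omega
  intro w hw
  obtain ⟨pw, hpw, hvw, -⟩ := key w hw
  obtain ⟨pu, hpu, hvu, -⟩ := key u hu
  set qw : G.Walk r v := (SimpleGraph.Walk.cons hw.1.symm pw.reverse).reverse with hqw
  set qu : G.Walk r v := (SimpleGraph.Walk.cons hu.1.symm pu.reverse).reverse with hqu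
  have hqwp : qw.IsPath := by
    rw [hqw, Walk.isPath_reverse_iff, Walk.cons_isPath_iff]
    exact ⟨hpw.reverse, by simpa using hvw⟩
  have hqup : qu.IsPath := by
    rw [hqu, Walk.isPath_reverse_iff, Walk.cons_isPath_iff]
    exact ⟨hpu.reverse, by simpa using hvu⟩
  have heq : qw = qu := by
    have := isAcyclic_iff_path_unique.mp hT.IsAcyclic (⟨qw, hqwp⟩ : G.Path r v) ⟨qu, hqup⟩
    exact congrArg Subtype.val this
  have heq' : (SimpleGraph.Walk.cons hw.1.symm pw.reverse) =
      (SimpleGraph.Walk.cons hu.1.symm pu.reverse) := by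
    have := congrArg SimpleGraph.Walk.reverse heq
    simpa [hqw, hqu] using this
  have hsupp := congrArg SimpleGraph.Walk.support heq'
  simp only [SimpleGraph.Walk.support_cons] at hsupp
  have : pw.reverse.support = pu.reverse.support := List.tail_eq_of_cons_eq hsupp
  have h1 := SimpleGraph.Walk.support_eq_cons pw.reverse
  have h2 := SimpleGraph.Walk.support_eq_cons pu.reverse
  rw [h1, h2] at this
  exact List.head_eq_of_cons_eq this

/-- The parent of a vertex (the root is sent to itself). -/
noncomputable def par (hT : G.IsTree) (r : V) (v : V) : V :=
  if h : G.dist r v = 0 then r else (tree_parent hT h).exists.choose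

lemma par_spec (hT : G.IsTree) {r v : V} (hv : G.dist r v ≠ 0) :
    G.Adj (par hT r v) v ∧ G.dist r (par hT r v) + 1 = G.dist r v := by
  rw [par, dif_neg hv]
  exact (tree_parent hT hv).exists.choose_spec

lemma par_eq (hT : G.IsTree) {r u v : V} (hadj : G.Adj u v)
    (h : G.dist r u + 1 = G.dist r v) : par hT r v = u := by
  have hv : G.dist r v ≠ 0 := by omega
  obtain ⟨w, hw, huniq⟩ := tree_parent hT hv
  rw [huniq _ ⟨hadj, h⟩, huniq _ (par_spec hT hv)]

lemma root_of_level_zero' (hT : G.IsTree) {r x : V} (h : G.dist r x = 0) : x = r :=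
  ((hT.isConnected.dist_eq_zero_iff).mp h).symm

lemma par_iter_level (hT : G.IsTree) {r v : V} {n : ℕ} (hn : n ≤ G.dist r v) :
    G.dist r ((par hT r)^[n] v) + n = G.dist r v := by
  induction n with
  | zero => simp
  | succ m ih =>
      rw [Function.iterate_succ_apply']
      have h1 := ih (by omega)
      have h2 := (par_spec hT (v := (par hT r)^[m] v) (r := r) (by omega)).2
      omega

lemma par_iter_dist (hT : G.IsTree) {r v : V} {n : ℕ} (hn : n ≤ G.dist r v) :
    G.dist ((par hT r)^[n] v) v = n := by
  have hub : G.dist ((par hT r)^[n] v) v ≤ n := by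
    clear hn
    induction n with
    | zero => simp
    | succ m ih =>
        by_cases hm : G.dist r ((par hT r)^[m] v) = 0
        · have hr : (par hT r)^[m] v = r := root_of_level_zero' hT hm
          rw [Function.iterate_succ_apply', hr, par, dif_pos SimpleGraph.dist_self]
          rw [hr] at ih
          omega
        · have hadj := (par_spec hT hm).1
          have htri : G.dist ((par hT r)^[m+1] v) v
              ≤ G.dist ((par hT r)^[m+1] v) ((par hT r)^[m] v)
                + G.dist ((par hT r)^[m] v) v := hT.isConnected.dist_triangle
          have h1 : G.dist ((par hT r)^[m+1] v) ((par hT r)^[m] v) = 1 := by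
            rw [Function.iterate_succ_apply']
            exact dist_eq_one_iff_adj.mpr hadj
          omega
  have hlb : G.dist r v ≤ G.dist r ((par hT r)^[n] v) + G.dist ((par hT r)^[n] v) v :=
    hT.isConnected.dist_triangle
  have := par_iter_level hT hn
  omega

/-- The ancestor of `v` at level `j`. -/
noncomputable def anc (hT : G.IsTree) (r : V) (j : ℕ) (v : V) : V :=
  (par hT r)^[G.dist r v - j] v

lemma anc_level (hT : G.IsTree) {r v : V} {j : ℕ} (hj : j ≤ G.dist r v) :
    G.dist r (anc hT r j v) = j := by
  have := par_iter_level hT (r := r) (v := v) (n := G.dist r v - j) (by omega)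
  rw [anc]; omega

lemma anc_dist (hT : G.IsTree) {r v : V} {j : ℕ} (hj : j ≤ G.dist r v) :
    G.dist (anc hT r j v) v + j = G.dist r v := by
  have := par_iter_dist hT (r := r) (v := v) (n := G.dist r v - j) (by omega)
  rw [anc]; omega

lemma anc_self (hT : G.IsTree) {r v : V} : anc hT r (G.dist r v) v = v := by
  rw [anc, Nat.sub_self]; rfl

lemma anc_anc (hT : G.IsTree) {r v : V} {t j : ℕ} (ht : t ≤ j) (hj : j ≤ G.dist r v) :
    anc hT r t (anc hT r j v) = anc hT r t v := by
  have hl := anc_level hT hj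
  rw [show anc hT r t (anc hT r j v) = (par hT r)^[j - t] (anc hT r j v) from by
    rw [anc, hl]]
  rw [anc, ← Function.iterate_add_apply]
  congr 1
  omega

lemma anc_par (hT : G.IsTree) {r v : V} {j : ℕ} (hv : G.dist r v ≠ 0)
    (hj : j + 1 ≤ G.dist r v) : anc hT r j (par hT r v) = anc hT r j v := by
  have hl := (par_spec hT hv).2
  have hc : G.dist r v - j = (G.dist r (par hT r v) - j) + 1 := by omega
  rw [anc, anc, hc, Function.iterate_succ_apply]

lemma anc_zero (hT : G.IsTree) {r v : V} : anc hT r 0 v = r :=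
  root_of_level_zero' hT (anc_level hT (Nat.zero_le _))

/-- The "meet" of two vertices in a tree. -/
lemma tree_meet (hT : G.IsTree) (r : V) (u v : V) :
    ∃ j, j ≤ G.dist r u ∧ j ≤ G.dist r v ∧ anc hT r j u = anc hT r j v ∧
      G.dist u v + 2 * j = G.dist r u + G.dist r v := by
  suffices H : ∀ (n : ℕ) (u v : V), G.dist u v = n → ∃ j, j ≤ G.dist r u ∧ j ≤ G.dist r v ∧
      anc hT r j u = anc hT r j v ∧ G.dist u v + 2 * j = G.dist r u + G.dist r v from
    H (G.dist u v) u v rfl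
  intro n
  induction n using Nat.strong_induction_on with
  | _ n ih =>
    intro u v hn
    match n, hn with
    | 0, hn =>
        have huv : u = v := (hT.isConnected.dist_eq_zero_iff).mp hn
        subst huv
        exact ⟨G.dist r u, le_refl _, le_refl _, rfl, by
          have : G.dist u u = 0 := SimpleGraph.dist_self
          omega⟩
    | (n+1), hn =>
        obtain ⟨p, hp⟩ := hT.isConnected.exists_walk_length_eq_dist u v
        rw [hn] at hp
        cases p with
        | nil => simp at hp
        | @cons _ c _ h q =>
            have hq : q.length = n := by simpa using hp
            have hcv : G.dist c v = n := by
              have h1 : G.dist c v ≤ n := hq ▸ SimpleGraph.dist_le q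
              have h2 : G.dist u v ≤ G.dist u c + G.dist c v := hT.isConnected.dist_triangle
              have h3 : G.dist u c = 1 := dist_eq_one_iff_adj.mpr h
              omega
            obtain ⟨j, hj1, hj2, hj3, hj4⟩ := ih n (by omega) c v hcv
            rcases tree_adj_level hT (r := r) h with hcase | hcase
            · -- dist r c = dist r u + 1, u = par c
              have hu : par hT r c = u := par_eq hT h (by omega)
              by_cases hju : j ≤ G.dist r u
              · exfalso
                have e1 : anc hT r j u = anc hT r j c := by
                  rw [← hu]
                  exact anc_par hT (by omega) (by omega)
                have e2 : anc hT r j u = anc hT r j v := e1.trans hj3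
                have d1 := anc_dist hT (r := r) (v := u) (j := j) hju
                have d2 := anc_dist hT (r := r) (v := v) (j := j) hj2
                have tri := hT.isConnected.dist_triangle (u := u) (v := anc hT r j u) (w := v)
                have e3 : G.dist (anc hT r j u) v = G.dist (anc hT r j v) v := by rw [e2]
                have dc : G.dist u (anc hT r j u) = G.dist (anc hT r j u) u :=
                  SimpleGraph.dist_comm
                omega
              · have hjc : j = G.dist r u + 1 := by omega
                have hcc : anc hT r j c = c := by
                  rw [show j = G.dist r c from by omega]
                  exact anc_self hT
                have hcv' : c = anc hT r j v := by rw [← hj3]; exact hcc.symm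
                have hanc : anc hT r (G.dist r u) u = anc hT r (G.dist r u) v := by
                  obtain ⟨m, hm⟩ : ∃ m, G.dist r u = m := ⟨_, rfl⟩
                  rw [hm]
                  have h1 : anc hT r m v = anc hT r m c := by
                    rw [hcv', anc_anc hT (by omega) hj2]
                  have h2 : anc hT r m c = anc hT r m (par hT r c) :=
                    (anc_par hT (by omega) (by omega)).symm
                  rw [h1, h2, hu]
                refine ⟨G.dist r u, le_refl _, ?_, hanc, ?_⟩
                · omega
                · omega
            · -- dist r u = dist r c + 1, c = par u
              have hc : par hT r u = c := par_eq hT h.symm (by omega)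
              have hanc : anc hT r j u = anc hT r j v := by
                have h2 : anc hT r j (par hT r u) = anc hT r j u :=
                  anc_par hT (by omega) (by omega)
                rw [← hj3, ← h2, hc]
              refine ⟨j, ?_, hj2, hanc, ?_⟩
              · omega
              · omega

/-- `w` is an ancestor of `u` (relative to root `r`). -/
def IsAnc (hT : G.IsTree) (r w u : V) : Prop :=
  G.dist r w ≤ G.dist r u ∧ anc hT r (G.dist r w) u = w

lemma common_anc_count [Fintype V] (hT : G.IsTree) (r : V) (u v : V) :
    G.dist u v + 2 * (Finset.univ.filter
        (fun w => IsAnc hT r w u ∧ IsAnc hT r w v)).card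
      = G.dist r u + G.dist r v + 2 := by
  obtain ⟨j, hj1, hj2, hj3, hj4⟩ := tree_meet hT r u v
  have hset : Finset.univ.filter (fun w => IsAnc hT r w u ∧ IsAnc hT r w v)
      = (Finset.range (j+1)).image (fun t => anc hT r t u) := by
    ext w
    simp only [Finset.mem_filter, Finset.mem_univ, true_and, Finset.mem_image,
      Finset.mem_range]
    constructor
    · rintro ⟨⟨hw1, hw2⟩, hw3, hw4⟩
      refine ⟨G.dist r w, ?_, hw2⟩
      by_contra hgt
      push_neg at hgt
      have d1 := anc_dist hT (r := r) (v := u) (j := G.dist r w) hw1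
      have d2 := anc_dist hT (r := r) (v := v) (j := G.dist r w) hw3
      rw [hw2] at d1
      rw [hw4] at d2
      have tri := hT.isConnected.dist_triangle (u := u) (v := w) (w := v)
      have dc : G.dist u w = G.dist w u := SimpleGraph.dist_comm
      omega
    · rintro ⟨t, ht, rfl⟩
      have htu : t ≤ G.dist r u := by omega
      have hl : G.dist r (anc hT r t u) = t := anc_level hT htu
      have heq : anc hT r t u = anc hT r t v := by
        rw [← anc_anc hT (t := t) (j := j) (by omega) hj1, hj3,
          anc_anc hT (t := t) (j := j) (by omega) hj2]
      refine ⟨⟨?_, ?_⟩, ?_, ?_⟩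
      · rw [hl]; exact htu
      · rw [hl]
      · rw [hl]; omega
      · rw [hl, heq]
  rw [hset, Finset.card_image_of_injOn, Finset.card_range]
  · omega
  · intro a ha b hb hab
    simp only [Finset.mem_coe, Finset.mem_range] at ha hb
    have h1 : G.dist r (anc hT r a u) = a := anc_level hT (by omega)
    have h2 : G.dist r (anc hT r b u) = b := anc_level hT (by omega)
    have hab' : anc hT r a u = anc hT r b u := hab
    rw [← h1, ← h2, hab']

lemma sum_dist_eq [Fintype V] (hT : G.IsTree) (r : V) :
    (∑ u : V, ∑ v : V, G.dist u v)
        + 2 * ∑ w : V, (Finset.univ.filter (fun u => IsAnc hT r w u)).card ^ 2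
      = 2 * (Fintype.card V) * (∑ u : V, G.dist r u)
        + 2 * (Fintype.card V) ^ 2 := by
  have hsq : ∀ w : V, (Finset.univ.filter (fun u => IsAnc hT r w u)).card ^ 2
      = ∑ u : V, ∑ v : V,
          (if IsAnc hT r w u then 1 else 0) * (if IsAnc hT r w v then 1 else 0) := by
    intro w
    rw [Finset.card_filter, sq, Finset.sum_mul_sum]
  have hC : ∀ u v : V,
      (Finset.univ.filter (fun w => IsAnc hT r w u ∧ IsAnc hT r w v)).card
      = ∑ w : V, (if IsAnc hT r w u then 1 else 0) * (if IsAnc hT r w v then 1 else 0) := by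
    intro u v
    rw [Finset.card_filter]
    congr 1; funext w
    by_cases h1 : IsAnc hT r w u <;> by_cases h2 : IsAnc hT r w v <;> simp [h1, h2]
  have hswap : ∑ w : V, (Finset.univ.filter (fun u => IsAnc hT r w u)).card ^ 2
      = ∑ u : V, ∑ v : V,
        (Finset.univ.filter (fun w => IsAnc hT r w u ∧ IsAnc hT r w v)).card := by
    simp_rw [hsq, hC]
    rw [Finset.sum_comm]
    congr 1; funext u
    rw [Finset.sum_comm]
  rw [hswap]
  have hmain : (∑ u : V, ∑ v : V, G.dist u v)
      + 2 * ∑ u : V, ∑ v : V,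
          (Finset.univ.filter (fun w => IsAnc hT r w u ∧ IsAnc hT r w v)).card
      = ∑ u : V, ∑ v : V, (G.dist r u + G.dist r v + 2) := by
    rw [Finset.mul_sum, ← Finset.sum_add_distrib]
    congr 1; funext u
    rw [Finset.mul_sum, ← Finset.sum_add_distrib]
    congr 1; funext v
    have := common_anc_count hT r u v
    omega
  rw [hmain]
  simp only [Finset.sum_add_distrib, Finset.sum_const, Finset.card_univ, smul_eq_mul]
  ring_nf
  rw [← Finset.mul_sum]
  ring

end TreeLemmas

section BetheCounting

variable {V : Type*} {G : SimpleGraph V}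
variable [Fintype V] [DecidableRel G.Adj] (hT : G.IsTree) (r : V) (k : ℕ) (ds : ℕ → ℕ)
variable (hB : ∀ i ∈ Finset.Icc 1 k, ∀ v : V, G.dist r v = i - 1 →
      ((G.neighborFinset v).filter (fun u => G.dist r u = i)).card = ds i)

include hT hB

lemma children_card {i : ℕ} (hi1 : 1 ≤ i) (hik : i ≤ k) {v : V} (hv : G.dist r v = i - 1) :
    (Finset.univ.filter (fun u => par hT r u = v ∧ G.dist r u = i)).card = ds i := by
  have hset : Finset.univ.filter (fun u => par hT r u = v ∧ G.dist r u = i)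
      = (G.neighborFinset v).filter (fun u => G.dist r u = i) := by
    ext u
    simp only [Finset.mem_filter, Finset.mem_univ, true_and, SimpleGraph.mem_neighborFinset]
    constructor
    · rintro ⟨h1, h2⟩
      refine ⟨?_, h2⟩
      have := (par_spec hT (r := r) (v := u) (by omega)).1
      rw [h1] at this
      exact this
    · rintro ⟨h1, h2⟩
      exact ⟨par_eq hT h1 (by omega), h2⟩
  rw [hset]
  exact hB i (Finset.mem_Icc.mpr ⟨hi1, hik⟩) v hv

lemma level_card_step {i : ℕ} (hi1 : 1 ≤ i) (hik : i ≤ k) :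
    (Finset.univ.filter (fun u : V => G.dist r u = i)).card
      = ds i * (Finset.univ.filter (fun v : V => G.dist r v = i - 1)).card := by
  rw [Finset.card_eq_sum_card_fiberwise (f := par hT r)
      (t := Finset.univ.filter (fun v : V => G.dist r v = i - 1))
      (fun u hu => by
        simp only [Finset.mem_coe, Finset.mem_filter, Finset.mem_univ, true_and] at hu ⊢
        have := (par_spec hT (r := r) (v := u) (by omega)).2
        omega)]
  rw [Finset.sum_congr rfl (fun v hv => ?_), Finset.sum_const, smul_eq_mul, mul_comm]
  have hv' : G.dist r v = i - 1 := by
    simpa using (Finset.mem_filter.mp hv).2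
  rw [← children_card hT r k ds hB hi1 hik hv']
  congr 1
  ext u
  simp only [Finset.mem_filter, Finset.mem_univ, true_and]
  tauto

omit hB in
lemma level_zero : (Finset.univ.filter (fun u : V => G.dist r u = 0)) = {r} := by
  ext u
  simp only [Finset.mem_filter, Finset.mem_univ, true_and, Finset.mem_singleton]
  exact ⟨fun h => root_of_level_zero' hT h, fun h => by rw [h]; exact SimpleGraph.dist_self⟩

lemma descendant_card {i : ℕ} (hi1 : 1 ≤ i) {w : V} (hw : G.dist r w = i) :
    ∀ t : ℕ, i + t ≤ k →
      (Finset.univ.filter (fun u : V => G.dist r u = i + t ∧ IsAnc hT r w u)).card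
        = ∏ s ∈ Finset.Icc (i+1) (i+t), ds s := by
  intro t
  induction t with
  | zero =>
      intro _
      have hset : (Finset.univ.filter (fun u : V => G.dist r u = i + 0 ∧ IsAnc hT r w u))
          = {w} := by
        ext u
        simp only [Finset.mem_filter, Finset.mem_univ, true_and, Finset.mem_singleton,
          Nat.add_zero]
        constructor
        · rintro ⟨h1, h2, h3⟩
          have hself : anc hT r (G.dist r w) u = u := by
            rw [show G.dist r w = G.dist r u from by omega]
            exact anc_self hT
          rw [← h3]
          exact hself.symm
        · rintro rfl
          exact ⟨by omega, le_refl _, anc_self hT⟩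
      rw [hset]
      simp
  | succ t ih =>
      intro hk'
      have ht : i + t ≤ k := by omega
      have hmaps : ∀ u ∈ Finset.univ.filter
          (fun u : V => G.dist r u = i + (t+1) ∧ IsAnc hT r w u), par hT r u ∈
          Finset.univ.filter (fun u : V => G.dist r u = i + t ∧ IsAnc hT r w u) := by
        intro u hu
        simp only [Finset.mem_filter, Finset.mem_univ, true_and] at hu ⊢
        obtain ⟨h1, h2, h3⟩ := hu
        have hp := (par_spec hT (r := r) (v := u) (by omega)).2
        refine ⟨by omega, by omega, ?_⟩
        rw [hw] at h3 ⊢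
        rw [anc_par hT (by omega) (by omega)]
        exact h3
      rw [Finset.card_eq_sum_card_fiberwise hmaps]
      have hfibcard : ∀ v ∈ Finset.univ.filter
          (fun u : V => G.dist r u = i + t ∧ IsAnc hT r w u),
          ((Finset.univ.filter (fun u : V => G.dist r u = i + (t+1) ∧ IsAnc hT r w u)).filter
            (fun u => par hT r u = v)).card = ds (i+t+1) := by
        intro v hv
        simp only [Finset.mem_filter, Finset.mem_univ, true_and] at hv
        obtain ⟨hv1, hv2, hv3⟩ := hv
        have hfib : ((Finset.univ.filter
              (fun u : V => G.dist r u = i + (t+1) ∧ IsAnc hT r w u)).filter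
            (fun u => par hT r u = v))
            = Finset.univ.filter (fun u => par hT r u = v ∧ G.dist r u = i + t + 1) := by
          ext u
          simp only [Finset.mem_filter, Finset.mem_univ, true_and]
          constructor
          · rintro ⟨⟨h1, h2⟩, h3⟩
            exact ⟨h3, by omega⟩
          · rintro ⟨h1, h2⟩
            refine ⟨⟨by omega, by omega, ?_⟩, h1⟩
            rw [hw]
            rw [show anc hT r i u = anc hT r i (par hT r u) from
              (anc_par hT (by omega) (by omega)).symm]
            rw [h1]
            rw [hw] at hv3
            exact hv3
        rw [hfib]
        exact children_card hT r k ds hB (by omega) (by omega)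
          (show G.dist r v = (i+t+1) - 1 by omega)
      rw [Finset.sum_congr rfl hfibcard, Finset.sum_const, smul_eq_mul, ih ht]
      rw [show i + (t+1) = (i + t) + 1 from by omega]
      rw [Finset.prod_Icc_succ_top (by omega)]

end BetheCounting

section Algebra

lemma sum_jp1_geom (y : ℚ) (k : ℕ) :
    (∑ j ∈ range k, ((j:ℚ)+1) * y^j) * (y-1)^2
      = (k:ℚ)*y^(k+1) - ((k:ℚ)+1)*y^k + 1 := by
  induction k with
  | zero => simp
  | succ m ih =>
      rw [Finset.sum_range_succ, add_mul, ih]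
      push_cast
      ring

lemma sum_sq_geom (y : ℚ) (k : ℕ) :
    (∑ j ∈ range k, y^j * (∑ t ∈ range (k-j), y^t)^2) * (y-1)^2
      = y^(k+1) * (∑ j ∈ range k, y^j) + (∑ j ∈ range k, y^j) - 2*(k:ℚ)*y^k := by
  have step : ∀ j ∈ range k, (y^j * (∑ t ∈ range (k-j), y^t)^2) * (y-1)^2
      = y^k * y^(k-j) - 2*y^k + y^j := by
    intro j hj
    rw [mem_range] at hj
    have h1 : (∑ t ∈ range (k-j), y^t) * (y-1) = y^(k-j) - 1 := geom_sum_mul y (k-j)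
    have h2 : y^j * y^(k-j) = y^k := by
      rw [← pow_add]
      congr 1
      omega
    calc (y^j * (∑ t ∈ range (k-j), y^t)^2) * (y-1)^2
        = y^j * ((∑ t ∈ range (k-j), y^t) * (y-1))^2 := by ring
      _ = y^j * (y^(k-j) - 1)^2 := by rw [h1]
      _ = (y^j * y^(k-j)) * y^(k-j) - 2*(y^j * y^(k-j)) + y^j := by ring
      _ = y^k * y^(k-j) - 2*y^k + y^j := by rw [h2]
  rw [Finset.sum_mul, Finset.sum_congr rfl step]
  have hrefl : ∑ j ∈ range k, y^(k-j) = ∑ j ∈ range k, y^(j+1) := by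
    rw [← Finset.sum_range_reflect (fun j => y^(j+1)) k]
    apply Finset.sum_congr rfl
    intro j hj
    rw [mem_range] at hj
    congr 1
    omega
  have expand : ∑ j ∈ range k, (y^k * y^(k-j) - 2*y^k + y^j)
      = y^k * (∑ j ∈ range k, y^(k-j)) - (k:ℚ)*(2*y^k) + ∑ j ∈ range k, y^j := by
    rw [Finset.sum_add_distrib, Finset.sum_sub_distrib, ← Finset.mul_sum, Finset.sum_const,
      card_range, nsmul_eq_mul]
  rw [expand, hrefl]
  have hy1 : ∑ j ∈ range k, y^(j+1) = y * ∑ j ∈ range k, y^j := by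
    rw [Finset.mul_sum]
    apply Finset.sum_congr rfl
    intro j _
    ring
  rw [hy1]
  ring

lemma final_algebra (k d : ℕ) (hk : 1 ≤ k) (hd : 3 ≤ d) :
    (1 + ∑ j ∈ range k, (d:ℚ) * ((d:ℚ)-1)^j)
        * (∑ j ∈ range k, ((j:ℚ)+1) * ((d:ℚ)*((d:ℚ)-1)^j))
      - (d:ℚ) * ∑ j ∈ range k, ((d:ℚ)-1)^j * (∑ t ∈ range (k-j), ((d:ℚ)-1)^t)^2
    = (d:ℚ)/((d:ℚ)-2)^3 *
        (((d:ℚ)-1)^(2*k) * ((k:ℚ)*(d:ℚ)^2 - 2*((k:ℚ)+1)*(d:ℚ) + 1)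
          + 2*(d:ℚ)*((d:ℚ)-1)^k - 1) := by
  set y : ℚ := (d:ℚ) - 1 with hy
  have hd2 : (2:ℚ) ≤ (d:ℚ) - 1 := by
    have : (3:ℚ) ≤ (d:ℚ) := by exact_mod_cast hd
    linarith
  have hy1 : y - 1 ≠ 0 := by rw [hy]; intro h; linarith [hd2]
  have hA : (∑ j ∈ range k, y^j) * (y - 1) = y^k - 1 := geom_sum_mul y k
  have hB := sum_jp1_geom y k
  have hC := sum_sq_geom y k
  have hDd : ∑ j ∈ range k, ((j:ℚ)+1) * ((d:ℚ)*y^j)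
      = (d:ℚ) * ∑ j ∈ range k, ((j:ℚ)+1) * y^j := by
    rw [Finset.mul_sum]; apply Finset.sum_congr rfl; intros; ring
  have hNd : (1 + ∑ j ∈ range k, (d:ℚ) * y^j) = 1 + (d:ℚ) * ∑ j ∈ range k, y^j := by
    rw [Finset.mul_sum]
  rw [hDd, hNd]
  set A := ∑ j ∈ range k, y^j
  set B := ∑ j ∈ range k, ((j:ℚ)+1) * y^j
  set C := ∑ j ∈ range k, y^j * (∑ t ∈ range (k-j), y^t)^2
  have hd2' : (d:ℚ) - 2 = y - 1 := by rw [hy]; ring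
  have h2k : ((d:ℚ)-1)^(2*k) = (y^k)^2 := by rw [← hy, mul_comm 2 k, pow_mul]
  rw [hd2', h2k]
  have hAv : A = (y^k - 1)/(y-1) := by rw [eq_div_iff hy1]; exact hA
  have hBv : B = ((k:ℚ)*y^(k+1) - ((k:ℚ)+1)*y^k + 1)/(y-1)^2 := by
    rw [eq_div_iff (pow_ne_zero 2 hy1)]; exact hB
  have hCv : C = (y^(k+1) * ((y^k - 1)/(y-1)) + ((y^k - 1)/(y-1)) - 2*(k:ℚ)*y^k)/(y-1)^2 := by
    rw [eq_div_iff (pow_ne_zero 2 hy1), ← hAv]; exact hC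
  rw [hAv, hBv, hCv]
  field_simp
  ring

end Algebra

/-- Wiener index of the regular dendrimer tree `T_{k,d}` of `k+1` levels (the generalized Bethe
tree of `k+1` levels whose degree sequence is `d₁ = d` and `dᵢ = d - 1` for `2 ≤ i ≤ k`):
`W(T_{k,d}) = d/(d-2)³ · [ (d-1)^{2k} (k d² - 2(k+1) d + 1) + 2 d (d-1)^k - 1 ]`. -/
theorem wiener_index_dendrimer {V : Type*} [Fintype V] (G : SimpleGraph V)
    [DecidableRel G.Adj] (r : V) (k d : ℕ) (hk : 1 ≤ k) (hd : 3 ≤ d)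
    (ds : ℕ → ℕ) (hds1 : ds 1 = d) (hdsi : ∀ i, 2 ≤ i → i ≤ k → ds i = d - 1)
    (hG : IsGeneralizedBetheTree G r k ds) :
    (wienerIndex G : ℚ) =
      (d : ℚ) / ((d : ℚ) - 2) ^ 3 *
        (((d : ℚ) - 1) ^ (2 * k) * ((k : ℚ) * (d : ℚ) ^ 2 - 2 * ((k : ℚ) + 1) * (d : ℚ) + 1)
          + 2 * (d : ℚ) * ((d : ℚ) - 1) ^ k - 1) := by
  obtain ⟨hT, hB, hle, -⟩ := hG
  -- Level cardinalities
  have hLcard : ∀ i, 1 ≤ i → i ≤ k →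
      (Finset.univ.filter (fun u : V => G.dist r u = i)).card = d * (d-1)^(i-1) := by
    intro i
    induction i with
    | zero => exact fun h => absurd h (by omega)
    | succ m ih =>
        intro _ hmk
        rw [level_card_step hT r k ds hB (by omega) hmk]
        rcases Nat.eq_zero_or_pos m with rfl | hm
        · rw [show (0:ℕ) + 1 - 1 = 0 from rfl, level_zero hT r]
          simp [hds1]
        · have hm' := ih (by omega) (by omega)
          rw [show m + 1 - 1 = m from rfl, hm', hdsi (m+1) (by omega) hmk]
          have he : (d-1) * (d * (d-1)^(m-1)) = d * ((d-1)^(m-1) * (d-1)) := by ring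
          rw [he, ← pow_succ]
          congr 2
          omega
  -- number of vertices
  have hNcard : Fintype.card V = 1 + ∑ j ∈ range k, d * (d-1)^j := by
    have h0 : (Finset.univ : Finset V).card
        = ∑ i ∈ range (k+1), (Finset.univ.filter (fun u : V => G.dist r u = i)).card := by
      apply Finset.card_eq_sum_card_fiberwise (f := fun u : V => G.dist r u)
      intro u _
      rw [Finset.mem_coe, Finset.mem_range]
      exact Nat.lt_succ_of_le (hle u)
    rw [← Finset.card_univ, h0, Finset.sum_range_succ']
    rw [level_zero hT r, Finset.card_singleton]
    rw [add_comm]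
    congr 1
    apply Finset.sum_congr rfl
    intro j hj
    rw [Finset.mem_range] at hj
    rw [hLcard (j+1) (by omega) (by omega)]
    simp
  -- sum of levels
  have hDsum : (∑ u : V, G.dist r u) = ∑ j ∈ range k, (j+1) * (d * (d-1)^j) := by
    have h0 : (∑ u : V, G.dist r u)
        = ∑ i ∈ range (k+1), ∑ u ∈ Finset.univ.filter (fun u : V => G.dist r u = i),
            G.dist r u := by
      rw [Finset.sum_fiberwise_of_maps_to (fun u _ => Finset.mem_range.mpr
        (Nat.lt_succ_of_le (hle u)))]
    rw [h0]
    have h1 : ∀ i ∈ range (k+1), (∑ u ∈ Finset.univ.filter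
        (fun u : V => G.dist r u = i), G.dist r u)
        = i * (Finset.univ.filter (fun u : V => G.dist r u = i)).card := by
      intro i _
      rw [Finset.sum_congr rfl (fun u hu => (Finset.mem_filter.mp hu).2), Finset.sum_const,
        smul_eq_mul, mul_comm]
    rw [Finset.sum_congr rfl h1, Finset.sum_range_succ']
    simp only [Nat.zero_mul, add_zero, zero_mul]
    apply Finset.sum_congr rfl
    intro j hj
    rw [Finset.mem_range] at hj
    rw [hLcard (j+1) (by omega) (by omega)]
    simp
  -- subtree sizes
  have hsub : ∀ w : V, 1 ≤ G.dist r w →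
      (Finset.univ.filter (fun u => IsAnc hT r w u)).card
        = ∑ t ∈ range (k - G.dist r w + 1), (d-1)^t := by
    intro w hw1
    obtain ⟨i, hi⟩ : ∃ i, G.dist r w = i := ⟨_, rfl⟩
    rw [hi]
    rw [hi] at hw1
    have hik : i ≤ k := hi ▸ hle w
    have h0 : (Finset.univ.filter (fun u => IsAnc hT r w u)).card
        = ∑ t ∈ range (k - i + 1), ((Finset.univ.filter (fun u => IsAnc hT r w u)).filter
            (fun u => G.dist r u - i = t)).card := by
      apply Finset.card_eq_sum_card_fiberwise
      intro u hu
      rw [Finset.mem_coe, Finset.mem_filter] at hu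
      rw [Finset.mem_coe, Finset.mem_range]
      have h1 : G.dist r w ≤ G.dist r u := hu.2.1
      have h2 := hle u
      beta_reduce
      omega
    rw [h0]
    apply Finset.sum_congr rfl
    intro t htr
    rw [Finset.mem_range] at htr
    have hfib : ((Finset.univ.filter (fun u => IsAnc hT r w u)).filter
          (fun u => G.dist r u - i = t))
        = Finset.univ.filter (fun u : V => G.dist r u = i + t ∧ IsAnc hT r w u) := by
      ext u
      simp only [Finset.mem_filter, Finset.mem_univ, true_and]
      constructor
      · rintro ⟨h1, h2⟩
        have h3 : G.dist r w ≤ G.dist r u := h1.1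
        rw [hi] at h3
        exact ⟨by omega, h1⟩
      · rintro ⟨h1, h2⟩
        exact ⟨h2, by omega⟩
    rw [hfib, descendant_card hT r k ds hB hw1 hi t (by omega)]
    have hconst : ∀ s ∈ Finset.Icc (i+1) (i+t), ds s = d - 1 := by
      intro s hs
      rw [Finset.mem_Icc] at hs
      exact hdsi s (by omega) (by omega)
    rw [Finset.prod_congr rfl hconst, Finset.prod_const, Nat.card_Icc]
    have he : i + t + 1 - (i + 1) = t := by omega
    rw [he]
  -- subtree size of root
  have hsubr : (Finset.univ.filter (fun u => IsAnc hT r r u)).card = Fintype.card V := by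
    rw [← Finset.card_univ]
    congr 1
    ext u
    simp only [Finset.mem_filter, Finset.mem_univ, true_and, iff_true]
    constructor
    · rw [SimpleGraph.dist_self]
      exact Nat.zero_le _
    · rw [SimpleGraph.dist_self]
      exact anc_zero hT
  -- sum of squares of subtree sizes
  have hSsum : (∑ w : V, (Finset.univ.filter (fun u => IsAnc hT r w u)).card ^ 2)
      = (Fintype.card V)^2
        + ∑ j ∈ range k, (d * (d-1)^j) * (∑ t ∈ range (k - j), (d-1)^t)^2 := by
    have h0 : (∑ w : V, (Finset.univ.filter (fun u => IsAnc hT r w u)).card ^ 2)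
        = ∑ i ∈ range (k+1), ∑ w ∈ Finset.univ.filter (fun w : V => G.dist r w = i),
            (Finset.univ.filter (fun u => IsAnc hT r w u)).card ^ 2 := by
      rw [Finset.sum_fiberwise_of_maps_to (fun u _ => Finset.mem_range.mpr
        (Nat.lt_succ_of_le (hle u)))]
    rw [h0, Finset.sum_range_succ']
    have hz : ∑ w ∈ Finset.univ.filter (fun w : V => G.dist r w = 0),
        (Finset.univ.filter (fun u => IsAnc hT r w u)).card ^ 2 = (Fintype.card V)^2 := by
      rw [level_zero hT r, Finset.sum_singleton, hsubr]
    rw [hz, add_comm]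
    congr 1
    apply Finset.sum_congr rfl
    intro j hj
    rw [Finset.mem_range] at hj
    have hinner : ∀ w ∈ Finset.univ.filter (fun w : V => G.dist r w = j+1),
        (Finset.univ.filter (fun u => IsAnc hT r w u)).card ^ 2
          = (∑ t ∈ range (k - j), (d-1)^t)^2 := by
      intro w hw
      rw [Finset.mem_filter] at hw
      have h2 := hsub w (by omega)
      have h3 : k - (j+1) + 1 = k - j := by omega
      rw [hw.2, h3] at h2
      rw [h2]
    rw [Finset.sum_congr rfl hinner, Finset.sum_const, smul_eq_mul]
    rw [hLcard (j+1) (by omega) (by omega)]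
    simp
  -- the master identity
  have hmaster := sum_dist_eq hT r
  rw [hSsum, hNcard, hDsum] at hmaster
  -- Wiener index
  set Sd := ∑ u : V, ∑ v : V, G.dist u v with hSd0
  set N := 1 + ∑ j ∈ range k, d * (d-1)^j with hN
  set D := ∑ j ∈ range k, (j+1) * (d * (d-1)^j) with hD
  set S := (N:ℕ)^2 + ∑ j ∈ range k, (d * (d-1)^j) * (∑ t ∈ range (k - j), (d-1)^t)^2 with hS
  rw [mul_assoc 2 N D] at hmaster
  have hdvd : 2 ∣ Sd := ⟨N * D + N^2 - S, by omega⟩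
  have hW2 : wienerIndex G * 2 = Sd := by
    rw [wienerIndex]
    exact Nat.div_mul_cancel hdvd
  have hWq : (wienerIndex G : ℚ) = (N:ℚ) * D + (N:ℚ)^2 - S := by
    have h1 : ((wienerIndex G * 2 : ℕ) : ℚ) = ((Sd : ℕ) : ℚ) := by exact_mod_cast hW2
    have h2 : ((Sd : ℕ) : ℚ) + 2*((S:ℕ):ℚ) = 2*(((N:ℕ):ℚ)*((D:ℕ):ℚ)) + 2*((N:ℕ):ℚ)^2 := by
      exact_mod_cast hmaster
    push_cast at h1 h2 ⊢
    linarith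
  rw [hWq]
  -- cast the sums to ℚ
  have hd1 : 1 ≤ d := by omega
  have hcast : ((d - 1 : ℕ) : ℚ) = (d:ℚ) - 1 := by
    push_cast [hd1]
    ring
  have hNq : ((N:ℕ):ℚ) = 1 + ∑ j ∈ range k, (d:ℚ) * ((d:ℚ)-1)^j := by
    rw [hN]
    push_cast [hcast]
    ring
  have hDq : ((D:ℕ):ℚ) = ∑ j ∈ range k, ((j:ℚ)+1) * ((d:ℚ)*((d:ℚ)-1)^j) := by
    rw [hD]
    push_cast [hcast]
    ring
  have hSq : ((S:ℕ):ℚ) = ((N:ℕ):ℚ)^2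
      + (d:ℚ) * ∑ j ∈ range k, ((d:ℚ)-1)^j * (∑ t ∈ range (k-j), ((d:ℚ)-1)^t)^2 := by
    rw [hS]
    push_cast [hcast]
    rw [Finset.mul_sum]
    congr 1
    apply Finset.sum_congr rfl
    intros
    ring
  rw [hSq, hNq, hDq]
  have := final_algebra k d hk hd
  linarith [this]
end

section
/- Let T be a tree on n vertices with maximum degree Δ ≥ 3. Then its terminal Wiener index satisfies TW(T) ≥ (n-1)(Δ-1). -/
open Finset

namespace TWaux

open SimpleGraph

variable {V : Type*} {T : SimpleGraph V}

lemma length_eq_dist (hT : T.IsTree) {u v : V} {p : T.Walk u v} (hp : p.IsPath) :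
    p.length = T.dist u v := by
  obtain ⟨q, hq, hql⟩ := hT.isConnected.exists_path_of_dist u v
  have : (⟨p, hp⟩ : T.Path u v) = ⟨q, hq⟩ :=
    (isAcyclic_iff_path_unique.mp hT.IsAcyclic) _ _
  rw [show p = q from congrArg Subtype.val this, hql]

lemma dist_add_dist_of_mem_support (hT : T.IsTree) {u v w : V} {p : T.Walk u v}
    (hp : p.IsPath) (hw : w ∈ p.support) :
    T.dist u w + T.dist w v = T.dist u v := by
  classical
  have h1 := length_eq_dist hT (hp.takeUntil hw)
  have h2 := length_eq_dist hT (hp.dropUntil hw)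
  have h3 := length_eq_dist hT hp
  have := congrArg Walk.length (p.take_spec hw)
  rw [Walk.length_append] at this
  omega

/-- In a tree, distances to two adjacent vertices are distinct. -/
lemma dist_ne_of_adj (hT : T.IsTree) {a b w : V} (hab : T.Adj a b) :
    T.dist w a ≠ T.dist w b := by
  intro h
  obtain ⟨p, hp, hpl⟩ := hT.isConnected.exists_path_of_dist w a
  by_cases hb : b ∈ p.support
  · have := dist_add_dist_of_mem_support hT hp hb
    have hba : T.dist b a = 1 := dist_eq_one_iff_adj.mpr hab.symm
    omega
  · have hpath : ((Walk.cons hab.symm p.reverse).reverse).IsPath := by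
      apply Walk.IsPath.reverse
      exact hp.reverse.cons (by simpa using hb)
    have := length_eq_dist hT hpath
    simp only [Walk.length_reverse, Walk.length_cons, hpl] at this
    omega

lemma dist_succ_of_adj (hT : T.IsTree) {a b w : V} (hab : T.Adj a b) :
    T.dist w b = T.dist w a + 1 ∨ T.dist w a = T.dist w b + 1 := by
  have h1 : T.dist w a ≤ T.dist w b + T.dist b a :=
    hT.isConnected.dist_triangle
  have h2 : T.dist w b ≤ T.dist w a + T.dist a b :=
    hT.isConnected.dist_triangle
  have hba : T.dist b a = 1 := dist_eq_one_iff_adj.mpr hab.symm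
  have hab' : T.dist a b = 1 := dist_eq_one_iff_adj.mpr hab
  have := dist_ne_of_adj hT hab (w := w)
  omega

lemma same_side (hT : T.IsTree) {a b u u' : V} (hab : T.Adj a b) (huu' : T.Adj u u')
    (hne : s(u, u') ≠ s(a, b)) (hu : T.dist u a < T.dist u b) :
    T.dist u' a < T.dist u' b := by
  by_contra hcon
  have hu'ba : T.dist u' b < T.dist u' a := by
    have := dist_ne_of_adj hT hab (w := u'); omega
  have huu1 : T.dist u u' = 1 := dist_eq_one_iff_adj.mpr huu'
  have hu'u1 : T.dist u' u = 1 := dist_eq_one_iff_adj.mpr huu'.symm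
  have hab1 : T.dist a b = 1 := dist_eq_one_iff_adj.mpr hab
  have hba1 : T.dist b a = 1 := dist_eq_one_iff_adj.mpr hab.symm
  set m := T.dist u a with hm
  have hub : T.dist u b = m + 1 := by have := dist_succ_of_adj hT hab (w := u); omega
  have htr1 : T.dist u' a ≤ T.dist u' u + T.dist u a := hT.isConnected.dist_triangle
  have htr2 : T.dist u a ≤ T.dist u u' + T.dist u' a := hT.isConnected.dist_triangle
  have htr3 : T.dist u b ≤ T.dist u u' + T.dist u' b := hT.isConnected.dist_triangle
  have hu'a : T.dist u' a = m + 1 := by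
    have := dist_succ_of_adj hT hab (w := u'); omega
  have hu'b : T.dist u' b = m := by omega
  obtain ⟨P, hP, hPl⟩ := hT.isConnected.exists_path_of_dist u a
  have hu'P : u' ∉ P.support := by
    intro h
    have := dist_add_dist_of_mem_support hT hP h
    omega
  have hQ : (Walk.cons huu'.symm P).IsPath := hP.cons hu'P
  obtain ⟨R, hR, hRl⟩ := hT.isConnected.exists_path_of_dist u' b
  have haR : a ∉ R.support := by
    intro h
    have := dist_add_dist_of_mem_support hT hR h
    omega
  have hQ2 : ((Walk.cons hab R.reverse).reverse).IsPath := by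
    apply Walk.IsPath.reverse
    exact hR.reverse.cons (by simpa using haR)
  have heq : Walk.cons huu'.symm P = (Walk.cons hab R.reverse).reverse := by
    have := (isAcyclic_iff_path_unique.mp hT.IsAcyclic)
      (⟨_, hQ⟩ : T.Path u' a) ⟨_, hQ2⟩
    exact congrArg Subtype.val this
  have hmem : s(a, b) ∈ (Walk.cons huu'.symm P).edges := by
    rw [heq, Walk.edges_reverse, List.mem_reverse, Walk.edges_cons]
    exact List.mem_cons_self
  rw [Walk.edges_cons, List.mem_cons] at hmem
  rcases hmem with h | h
  · exact hne (Sym2.eq_swap.trans h.symm)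
  · have hbP : b ∈ P.support := P.snd_mem_support_of_mem_edges h
    have := dist_add_dist_of_mem_support hT hP hbP
    omega

lemma parent_unique (hT : T.IsTree) {b w x y : V} (hx : T.Adj w x) (hy : T.Adj w y)
    (hxb : T.dist x b < T.dist w b) (hyb : T.dist y b < T.dist w b) : x = y := by
  have hwx1 : T.dist x w = 1 := dist_eq_one_iff_adj.mpr hx.symm
  have hwy1 : T.dist y w = 1 := dist_eq_one_iff_adj.mpr hy.symm
  have hxb' : T.dist x b + 1 = T.dist w b := by
    have h := dist_succ_of_adj hT (a := x) (b := w) hx.symm (w := b)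
    have := SimpleGraph.dist_comm (G:=T) (u:=x) (v:=b)
    have := SimpleGraph.dist_comm (G:=T) (u:=w) (v:=b)
    omega
  have hyb' : T.dist y b + 1 = T.dist w b := by
    have h := dist_succ_of_adj hT (a := y) (b := w) hy.symm (w := b)
    have := SimpleGraph.dist_comm (G:=T) (u:=x) (v:=b)
    have := SimpleGraph.dist_comm (G:=T) (u:=y) (v:=b)
    have := SimpleGraph.dist_comm (G:=T) (u:=w) (v:=b)
    omega
  obtain ⟨Px, hPx, hPxl⟩ := hT.isConnected.exists_path_of_dist x b
  obtain ⟨Py, hPy, hPyl⟩ := hT.isConnected.exists_path_of_dist y b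
  have hwPx : w ∉ Px.support := by
    intro h
    have := dist_add_dist_of_mem_support hT hPx h
    omega
  have hwPy : w ∉ Py.support := by
    intro h
    have := dist_add_dist_of_mem_support hT hPy h
    omega
  have hQx : (Walk.cons hx Px).IsPath := hPx.cons hwPx
  have hQy : (Walk.cons hy Py).IsPath := hPy.cons hwPy
  have heq : Walk.cons hx Px = Walk.cons hy Py := by
    have := (isAcyclic_iff_path_unique.mp hT.IsAcyclic)
      (⟨_, hQx⟩ : T.Path w b) ⟨_, hQy⟩
    exact congrArg Subtype.val this
  have := congrArg (fun q => Walk.getVert q 1) heq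
  simpa using this

variable [Fintype V] [DecidableRel T.Adj]

lemma exists_leaf_side (hT : T.IsTree) {a b : V} (hab : T.Adj a b) :
    ∃ w, T.degree w = 1 ∧ T.dist w a < T.dist w b := by
  classical
  set S : Finset V := univ.filter (fun w => T.dist w a < T.dist w b) with hS
  have haS : a ∈ S := by
    simp only [hS, mem_filter, mem_univ, true_and, SimpleGraph.dist_self]
    have : T.dist a b = 1 := dist_eq_one_iff_adj.mpr hab
    omega
  obtain ⟨w, hwS, hwmax⟩ := S.exists_max_image (fun w => T.dist w b) ⟨a, haS⟩
  have hwab : T.dist w a < T.dist w b := by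
    simpa only [hS, mem_filter, mem_univ, true_and] using hwS
  refine ⟨w, ?_, hwab⟩
  -- find the parent of w towards b
  have hd0 : T.dist w b ≠ 0 := by omega
  obtain ⟨p, hpl⟩ := exists_walk_of_dist_ne_zero hd0
  cases p with
  | nil => exact absurd SimpleGraph.dist_self hd0
  | cons hwx q =>
    rename_i x
    have hxq : T.dist x b ≤ q.length := dist_le q
    have hql : q.length + 1 = T.dist w b := by simpa using hpl
    have hx0 : T.dist x b < T.dist w b := by omega
    -- degree at least 1
    have hx_mem : x ∈ T.neighborFinset w := by simpa using hwx
    have hdeg1 : 1 ≤ T.degree w := by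
      rw [← T.card_neighborFinset_eq_degree]
      exact Finset.card_pos.mpr ⟨x, hx_mem⟩
    -- degree at most 1
    by_contra hdeg
    have hdeg2 : 2 ≤ T.degree w := by omega
    rw [← T.card_neighborFinset_eq_degree] at hdeg2
    have hcard : 1 < (T.neighborFinset w).card := by omega
    obtain ⟨y, hy, z, hz, hyz⟩ := Finset.one_lt_card.mp hcard
    have hex : ∃ z', z' ∈ T.neighborFinset w ∧ z' ≠ x := by
      by_cases h : y = x
      · exact ⟨z, hz, by rw [← h]; exact fun hc => hyz hc.symm⟩
      · exact ⟨y, hy, h⟩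
    obtain ⟨z', hz'mem, hz'x⟩ := hex
    have hz'adj : T.Adj w z' := by simpa using hz'mem
    have hz'b : ¬ T.dist z' b < T.dist w b := by
      intro hlt
      exact hz'x (parent_unique hT hz'adj hwx hlt hx0)
    have hz'b' : T.dist z' b = T.dist w b + 1 := by
      have := dist_succ_of_adj hT (a := w) (b := z') hz'adj (w := b)
      have := SimpleGraph.dist_comm (G:=T) (u:=z') (v:=b)
      have := SimpleGraph.dist_comm (G:=T) (u:=w) (v:=b)
      omega
    have hwa : T.dist w a + 1 = T.dist w b := by
      have := dist_succ_of_adj hT hab (w := w); omega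
    have htr : T.dist z' a ≤ T.dist z' w + T.dist w a := hT.isConnected.dist_triangle
    have hz'w1 : T.dist z' w = 1 := dist_eq_one_iff_adj.mpr hz'adj.symm
    have hz'S : z' ∈ S := by
      simp only [hS, mem_filter, mem_univ, true_and]
      omega
    have := hwmax z' hz'S
    omega

lemma maxDegree_le_card_leaves (hT : T.IsTree) :
    T.maxDegree ≤ (univ.filter (fun v => T.degree v = 1)).card := by
  classical
  have : Nonempty V := hT.isConnected.nonempty
  obtain ⟨c, hc⟩ := T.exists_maximal_degree_vertex
  rw [hc, ← T.card_neighborFinset_eq_degree]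
  have H : ∀ x : V, ∃ w, x ∈ T.neighborFinset c →
      (T.degree w = 1 ∧ T.dist w x < T.dist w c) := by
    intro x
    by_cases hx : x ∈ T.neighborFinset c
    · have hadj : T.Adj x c := by simp at hx; exact hx.symm
      obtain ⟨w, hw1, hw2⟩ := exists_leaf_side hT hadj
      exact ⟨w, fun _ => ⟨hw1, hw2⟩⟩
    · exact ⟨c, fun h => absurd h hx⟩
  choose f hf using H
  apply Finset.card_le_card_of_injOn f
  · intro x hx
    simp only [Finset.mem_coe, mem_filter, mem_univ, true_and]
    exact (hf x hx).1
  · intro x hx y hy hxy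
    have h1 := hf x hx
    have h2 := hf y hy
    rw [hxy] at h1
    have hcx : T.Adj c x := by simp at hx; exact hx
    have hcy : T.Adj c y := by simp at hy; exact hy
    refine parent_unique hT (b := f y) hcx hcy ?_ ?_
    · rw [SimpleGraph.dist_comm (G:=T) (u:=x) (v:=_), SimpleGraph.dist_comm (G:=T) (u:=c) (v:=_)]; exact h1.2
    · rw [SimpleGraph.dist_comm (G:=T) (u:=y) (v:=_), SimpleGraph.dist_comm (G:=T) (u:=c) (v:=_)]; exact h2.2

/-- The edge `e` separates `u` from `v`. -/
def sep (T : SimpleGraph V) (u v : V) (e : Sym2 V) : Prop :=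
  ∃ a b, e = s(a, b) ∧ T.dist u a < T.dist u b ∧ T.dist v b < T.dist v a

open scoped Classical in
lemma dist_eq_card_sep (hT : T.IsTree) :
    ∀ (n : ℕ) (u v : V), T.dist u v = n →
      n = (T.edgeFinset.filter (sep T u v)).card := by
  intro n
  induction n with
  | zero =>
    intro u v h
    symm
    rw [Finset.card_eq_zero, Finset.filter_eq_empty_iff]
    rintro e he ⟨a, b, rfl, h1, h2⟩
    have huv : u = v := ((hT.isConnected.dist_eq_zero_iff).mp h)
    subst huv
    omega
  | succ n ih =>
    intro u v h
    obtain ⟨p, hp, hpl⟩ := hT.isConnected.exists_path_of_dist u v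
    cases p with
    | nil => rw [h] at hpl; simp at hpl
    | cons hux q =>
      rename_i x
      have hql : q.length = n := by rw [h] at hpl; simpa using hpl
      have hux1 : T.dist u x = 1 := dist_eq_one_iff_adj.mpr hux
      have hxv : T.dist x v = n := by
        have h1 : T.dist x v ≤ n := hql ▸ dist_le q
        have h2 : T.dist u v ≤ T.dist u x + T.dist x v := hT.isConnected.dist_triangle
        omega
      have hnotsep : ¬ sep T x v s(u, x) := by
        rintro ⟨a, b, hab, h1, h2⟩
        rcases Sym2.eq_iff.mp hab with ⟨rfl, rfl⟩ | ⟨rfl, rfl⟩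
        · have : T.dist x u = 1 := dist_eq_one_iff_adj.mpr hux.symm
          simp [SimpleGraph.dist_self] at h1
        · have hvu : T.dist v u = n + 1 := (SimpleGraph.dist_comm (G:=T)).trans h
          have hvx : T.dist v x = n := (SimpleGraph.dist_comm (G:=T)).trans hxv
          omega
      have hset : T.edgeFinset.filter (sep T u v) =
          insert s(u, x) (T.edgeFinset.filter (sep T x v)) := by
        ext e
        simp only [Finset.mem_insert, Finset.mem_filter]
        constructor
        · rintro ⟨he, a, b, rfl, h1, h2⟩
          by_cases hcase : s(a, b) = s(u, x)
          · exact Or.inl hcase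
          · refine Or.inr ⟨he, a, b, rfl, ?_, h2⟩
            have hab : T.Adj a b := (SimpleGraph.mem_edgeSet T).mp (mem_edgeFinset.mp he)
            exact same_side hT hab hux (fun hc => hcase hc.symm) h1
        · rintro (rfl | ⟨he, hsep⟩)
          · refine ⟨mem_edgeFinset.mpr ((SimpleGraph.mem_edgeSet T).mpr hux), u, x, rfl, ?_, ?_⟩
            · simp [SimpleGraph.dist_self]; omega
            · have hvu : T.dist v u = n + 1 := (SimpleGraph.dist_comm (G:=T)).trans h
              have hvx : T.dist v x = n := (SimpleGraph.dist_comm (G:=T)).trans hxv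
              omega
          · obtain ⟨a, b, rfl, h1, h2⟩ := hsep
            have hab : T.Adj a b := (SimpleGraph.mem_edgeSet T).mp (mem_edgeFinset.mp he)
            have hne : s(a, b) ≠ s(u, x) :=
              fun hc => hnotsep ⟨a, b, hc.symm, h1, h2⟩
            refine ⟨he, a, b, rfl, ?_, h2⟩
            exact same_side hT hab hux.symm
              (fun hc => hne (hc.symm.trans Sym2.eq_swap)) h1
      rw [hset, Finset.card_insert_of_notMem, ← ih x v hxv]
      simp only [Finset.mem_filter]
      exact fun hc => hnotsep hc.2

open scoped Classical in
lemma per_edge_bound (hT : T.IsTree) {a b : V} (hab : T.Adj a b) :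
    2 * (T.maxDegree - 1) ≤
      ∑ u ∈ univ.filter (fun v => T.degree v = 1),
        ∑ v ∈ univ.filter (fun v => T.degree v = 1),
          if sep T u v s(a, b) then 1 else 0 := by
  set L : Finset V := univ.filter (fun v => T.degree v = 1) with hL
  set A : Finset V := L.filter (fun u => T.dist u a < T.dist u b) with hA
  set B : Finset V := L.filter (fun u => ¬ T.dist u a < T.dist u b) with hB
  have hBalt : B = L.filter (fun u => T.dist u b < T.dist u a) := by
    apply Finset.filter_congr
    intro u _
    have := dist_ne_of_adj hT hab (w := u)
    constructor <;> intro h' <;> omega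
  have hsum : ∀ u ∈ A, (∑ v ∈ L, if sep T u v s(a, b) then 1 else 0) = B.card := by
    intro u hu
    have hua : T.dist u a < T.dist u b := (Finset.mem_filter.mp hu).2
    have : ∀ v, sep T u v s(a, b) ↔ T.dist v b < T.dist v a := by
      intro v
      constructor
      · rintro ⟨a', b', heq, h1, h2⟩
        rcases Sym2.eq_iff.mp heq with ⟨rfl, rfl⟩ | ⟨rfl, rfl⟩
        · exact h2
        · omega
      · intro h'
        exact ⟨a, b, rfl, hua, h'⟩
    simp only [this]
    rw [Finset.sum_boole]
    rw [hBalt]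
    simp
  have hsum' : ∀ u ∈ B, (∑ v ∈ L, if sep T u v s(a, b) then 1 else 0) = A.card := by
    intro u hu
    have hub : T.dist u b < T.dist u a := by
      have h1 := (Finset.mem_filter.mp hu).2
      have := dist_ne_of_adj hT hab (w := u)
      omega
    have : ∀ v, sep T u v s(a, b) ↔ T.dist v a < T.dist v b := by
      intro v
      constructor
      · rintro ⟨a', b', heq, h1, h2⟩
        rcases Sym2.eq_iff.mp heq with ⟨rfl, rfl⟩ | ⟨rfl, rfl⟩
        · omega
        · exact h2
      · intro h'
        exact ⟨b, a, Sym2.eq_swap.symm, hub, h'⟩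
    simp only [this]
    rw [Finset.sum_boole]
    simp [hA]
  rw [← Finset.sum_filter_add_sum_filter_not L (fun u => T.dist u a < T.dist u b)]
  rw [Finset.sum_congr rfl hsum, Finset.sum_congr rfl hsum']
  rw [Finset.sum_const, Finset.sum_const, smul_eq_mul, smul_eq_mul]
  -- now : 2 * (Δ - 1) ≤ A.card * B.card + B.card * A.card
  have hAB : A.card + B.card = L.card :=
    Finset.card_filter_add_card_filter_not _
  have hA1 : 1 ≤ A.card := by
    obtain ⟨w, hw1, hw2⟩ := exists_leaf_side hT hab
    refine Finset.card_pos.mpr ⟨w, ?_⟩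
    simp [hA, hL, hw1, hw2]
  have hB1 : 1 ≤ B.card := by
    obtain ⟨w, hw1, hw2⟩ := exists_leaf_side hT hab.symm
    refine Finset.card_pos.mpr ⟨w, ?_⟩
    simp only [hBalt, hL, Finset.mem_filter, Finset.mem_univ, true_and]
    exact ⟨hw1, hw2⟩
  have hΔL : T.maxDegree ≤ L.card := maxDegree_le_card_leaves hT
  obtain ⟨a', ha'⟩ := Nat.exists_eq_add_of_le hA1
  obtain ⟨b', hb'⟩ := Nat.exists_eq_add_of_le hB1
  have hprod : A.card * B.card = a' * b' + a' + b' + 1 := by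
    rw [ha', hb']; ring
  have h1 : T.maxDegree - 1 ≤ a' + b' + 1 := by omega
  have h2 : a' + b' + 1 ≤ A.card * B.card := by rw [hprod]; omega
  have hcomm : B.card * A.card = A.card * B.card := Nat.mul_comm _ _
  omega

end TWaux

open scoped Classical in
/-- If `T` is a tree on `n` vertices with maximum degree `Δ ≥ 3`, then
`TW(T) ≥ (n - 1)(Δ - 1)`. -/
theorem terminal_wiener_index_ge {V : Type*} [Fintype V] (T : SimpleGraph V)
    [DecidableRel T.Adj] (hT : T.IsTree) (hΔ : 3 ≤ T.maxDegree) :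
    (Fintype.card V - 1) * (T.maxDegree - 1) ≤ terminalWienerIndex T := by
  classical
  have hdist : ∀ u v : V, T.dist u v =
      ∑ e ∈ T.edgeFinset, (if TWaux.sep T u v e then 1 else 0) := by
    intro u v
    rw [TWaux.dist_eq_card_sep hT (T.dist u v) u v rfl]
    rw [Finset.sum_boole]
    simp
  have hLdef : pendentFinset T = univ.filter (fun v => T.degree v = 1) := rfl
  have step1 : (∑ u ∈ pendentFinset T, ∑ v ∈ pendentFinset T, T.dist u v) =
      ∑ e ∈ T.edgeFinset, ∑ u ∈ pendentFinset T, ∑ v ∈ pendentFinset T,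
        (if TWaux.sep T u v e then 1 else 0) := by
    simp_rw [hdist]
    rw [Finset.sum_congr rfl (fun u _ => Finset.sum_comm)]
    exact Finset.sum_comm
  have step2 : ∀ e ∈ T.edgeFinset, 2 * (T.maxDegree - 1) ≤
      ∑ u ∈ pendentFinset T, ∑ v ∈ pendentFinset T,
        (if TWaux.sep T u v e then 1 else 0) := by
    intro e he
    induction e using Sym2.ind with
    | _ a b =>
      have hab : T.Adj a b := (SimpleGraph.mem_edgeSet T).mp (SimpleGraph.mem_edgeFinset.mp he)
      rw [hLdef]
      exact TWaux.per_edge_bound hT hab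
  have step3 : T.edgeFinset.card * (2 * (T.maxDegree - 1)) ≤
      ∑ e ∈ T.edgeFinset, ∑ u ∈ pendentFinset T, ∑ v ∈ pendentFinset T,
        (if TWaux.sep T u v e then 1 else 0) := by
    calc T.edgeFinset.card * (2 * (T.maxDegree - 1))
        = ∑ _e ∈ T.edgeFinset, 2 * (T.maxDegree - 1) := by
          rw [Finset.sum_const, smul_eq_mul]
      _ ≤ _ := Finset.sum_le_sum step2
  have hE : T.edgeFinset.card = Fintype.card V - 1 := by
    have := hT.card_edgeFinset
    omega
  rw [terminalWienerIndex, Nat.le_div_iff_mul_le (by norm_num : 0 < 2)]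
  calc (Fintype.card V - 1) * (T.maxDegree - 1) * 2
      = T.edgeFinset.card * (2 * (T.maxDegree - 1)) := by rw [hE]; ring
    _ ≤ _ := step3.trans (le_of_eq step1.symm)
end
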